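/- arXiv:2403.08927 — 4 statements merged into one kernel-verified Lean document; each statement's English description precedes it below -/
import Mathlib

section
/- Assume the unit-level causal setup with treatment ignorability and overlap. Then for each z ∈ {0,1} and every bounded measurable function b : 𝒳 → ℝ, E[ 1{Z=z}·(D − b(X))/P_z(X) + b(X) ] = P(D(z) = 1), where P_1(X) = π(X) and P_0(X) = 1 − π(X). In particular the identity holds for any (possibly misspecified) outcome model b, provided the propensity score π is correct. -/
open MeasureTheory ProbabilityTheory Set

noncomputable section

variable {Ω 𝒳 : Type*} [MeasurableSpace Ω] [MeasurableSpace 𝒳]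

/-- Observed intermediate variable `D = Z·D(1) + (1−Z)·D(0)`. -/
def Dobs (Z D0 D1 : Ω → ℝ) (ω : Ω) : ℝ := Z ω * D1 ω + (1 - Z ω) * D0 ω

/-- `w` is a `σ(X)`-measurable version of the conditional probability of the event `A`
given `σ(X)`, represented as a measurable function of `X`. -/
def IsCondProb (P : Measure Ω) (X : Ω → 𝒳) (A : Set Ω) (w : 𝒳 → ℝ) : Prop :=
  Measurable w ∧
    (fun ω => w (X ω)) =ᵐ[P]
      P[A.indicator (fun _ => (1 : ℝ)) | MeasurableSpace.comap X inferInstance]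

/-- Conditional independence of `U` and `V` given `σ(X)`: the product rule for conditional
expectations of indicators of events generated by `U` and by `V`. -/
def CondIndepGiven (P : Measure Ω) (X : Ω → 𝒳) {E F : Type*} [MeasurableSpace E]
    [MeasurableSpace F] (U : Ω → E) (V : Ω → F) : Prop :=
  ∀ (s : Set E) (t : Set F), MeasurableSet s → MeasurableSet t →
    P[(fun ω => s.indicator (fun _ => (1 : ℝ)) (U ω) * t.indicator (fun _ => (1 : ℝ)) (V ω)) |
        MeasurableSpace.comap X inferInstance]
      =ᵐ[P]
    fun ω =>
      (P[(fun ω' => s.indicator (fun _ => (1 : ℝ)) (U ω')) |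
          MeasurableSpace.comap X inferInstance]) ω *
      (P[(fun ω' => t.indicator (fun _ => (1 : ℝ)) (V ω')) |
          MeasurableSpace.comap X inferInstance]) ω

/-- Pull-out lemma: for bounded measurable `φ` and integrable `g`,
`∫ φ(X)·g = ∫ φ(X)·E[g|σ(X)]`. -/
lemma integral_mul_condexp_comap (P : Measure Ω) [IsProbabilityMeasure P]
    (X : Ω → 𝒳) (hX : Measurable X)
    (φ : 𝒳 → ℝ) (c : ℝ) (hφ : Measurable φ) (hbd : ∀ᵐ ω ∂P, ‖φ (X ω)‖ ≤ c)
    (g : Ω → ℝ) (hg : Integrable g P) :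
    ∫ ω, φ (X ω) * g ω ∂P
      = ∫ ω, φ (X ω) * (P[g | MeasurableSpace.comap X inferInstance]) ω ∂P := by
  set m := MeasurableSpace.comap X (inferInstance : MeasurableSpace 𝒳) with hmdef
  have hm : m ≤ _ := hX.comap_le
  have hXm : Measurable[m] X := fun s hs => ⟨s, hs, rfl⟩
  have hsm : StronglyMeasurable[m] fun ω => φ (X ω) := (hφ.comp hXm).stronglyMeasurable
  have h := condExp_stronglyMeasurable_mul_of_bound hm hsm hg c hbd
  calc ∫ ω, φ (X ω) * g ω ∂P
      = ∫ ω, (P[fun ω => φ (X ω) * g ω | m]) ω ∂P := (integral_condExp hm).symm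
    _ = ∫ ω, φ (X ω) * (P[g | m]) ω ∂P := integral_congr_ae h

/-- **Doubly robust estimation of `P(D(z)=1)`: correct propensity score, arbitrary outcome
model `b`.** Under treatment ignorability and overlap, for `z ∈ {0,1}` and any bounded
measurable `b : 𝒳 → ℝ`,
`E[ 1{Z=z}·(D − b(X))/P_z(X) + b(X) ] = P(D(z) = 1)`,
where `P_1(X) = π(X)` and `P_0(X) = 1 − π(X)`. -/
theorem dr_identity_correct_propensity [StandardBorelSpace 𝒳]
    (P : Measure Ω) [IsProbabilityMeasure P]
    (X : Ω → 𝒳) (Z D0 D1 : Ω → ℝ)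
    (hX : Measurable X) (hZ : Measurable Z) (hD0 : Measurable D0) (hD1 : Measurable D1)
    (hZ01 : ∀ ω, Z ω = 0 ∨ Z ω = 1)
    (hD0_01 : ∀ ω, D0 ω = 0 ∨ D0 ω = 1) (hD1_01 : ∀ ω, D1 ω = 0 ∨ D1 ω = 1)
    -- π is a σ(X)-measurable version of P(Z=1 | σ(X))
    (πf : 𝒳 → ℝ) (hπ : IsCondProb P X {ω | Z ω = 1} πf)
    -- treatment ignorability: Z ⫫ (D(0), D(1)) | σ(X)
    (hign : CondIndepGiven P X Z (fun ω => (D0 ω, D1 ω)))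
    -- overlap
    (ε : ℝ) (hε : 0 < ε) (hε' : ε < 1 / 2)
    (hover : ∀ᵐ ω ∂P, ε < πf (X ω) ∧ πf (X ω) < 1 - ε)
    (z : ℝ) (hz : z = 0 ∨ z = 1)
    (b : 𝒳 → ℝ) (hb : Measurable b) (hbbd : ∃ C, ∀ x, |b x| ≤ C) :
    ∫ ω, ((if Z ω = z then (1 : ℝ) else 0) * (Dobs Z D0 D1 ω - b (X ω)) /
          (if z = 1 then πf (X ω) else 1 - πf (X ω)) + b (X ω)) ∂P
      = (P {ω | (if z = 1 then D1 ω else D0 ω) = 1}).toReal := by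
  classical
  obtain ⟨C, hC⟩ := hbbd
  set C' : ℝ := max C 0 with hC'def
  have hC'0 : 0 ≤ C' := le_max_right _ _
  have hC' : ∀ x, |b x| ≤ C' := fun x => (hC x).trans (le_max_left _ _)
  set Dz : Ω → ℝ := fun ω => if z = 1 then D1 ω else D0 ω with hDzdef
  set pz : 𝒳 → ℝ := fun x => if z = 1 then πf x else 1 - πf x with hpzdef
  set χ : Ω → ℝ := fun ω => if Z ω = z then (1 : ℝ) else 0 with hχdef
  have hπm : Measurable πf := hπ.1
  -- measurability
  have hDzm : Measurable Dz := by
    by_cases h1 : z = 1 <;> simp only [hDzdef, h1, if_true, if_false] <;>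
      [exact hD1; exact hD0]
  have hpzm : Measurable pz := by
    by_cases h1 : z = 1 <;> simp only [hpzdef, h1, if_true, if_false] <;>
      [exact hπm; exact (measurable_const.sub hπm)]
  have hχm : Measurable χ := Measurable.ite (hZ (measurableSet_singleton z))
    measurable_const measurable_const
  have hDz01 : ∀ ω, Dz ω = 0 ∨ Dz ω = 1 := by
    intro ω; by_cases h1 : z = 1 <;> simp only [hDzdef, h1, if_true, if_false] <;>
      [exact hD1_01 ω; exact hD0_01 ω]
  have hχ01 : ∀ ω, χ ω = 0 ∨ χ ω = 1 := by
    intro ω; by_cases h : Z ω = z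
    · right; exact if_pos h
    · left; exact if_neg h
  -- overlap bound for pz
  have hpzb : ∀ᵐ ω ∂P, ε < pz (X ω) := by
    filter_upwards [hover] with ω h
    by_cases h1 : z = 1 <;> simp only [hpzdef, h1, if_true, if_false] <;>
      [exact h.1; linarith [h.2]]
  -- integrability facts
  have hbX : Integrable (fun ω => b (X ω)) P := by
    refine Integrable.mono' (integrable_const C') (hb.comp hX).aestronglyMeasurable
      (ae_of_all P fun ω => ?_)
    rw [Real.norm_eq_abs]; exact hC' _
  have hχDz : ∀ ω, ‖χ ω * Dz ω‖ ≤ 1 := by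
    intro ω
    rcases hχ01 ω with h | h <;> rcases hDz01 ω with h' | h' <;> simp [h, h']
  have hδint : Integrable (fun ω => χ ω * Dz ω) P :=
    Integrable.mono' (integrable_const 1) (hχm.mul hDzm).aestronglyMeasurable
      (ae_of_all P hχDz)
  have hχb : ∀ ω, ‖χ ω‖ ≤ 1 := by
    intro ω; rcases hχ01 ω with h | h <;> simp [h]
  have hχint : Integrable χ P :=
    Integrable.mono' (integrable_const 1) hχm.aestronglyMeasurable (ae_of_all P hχb)
  have hDzint : Integrable Dz P := by
    refine Integrable.mono' (integrable_const 1) hDzm.aestronglyMeasurable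
      (ae_of_all P fun ω => ?_)
    rcases hDz01 ω with h | h <;> simp [h]
  have hindint : Integrable (({ω | Z ω = 1} : Set Ω).indicator (fun _ => (1 : ℝ))) P := by
    refine Integrable.mono' (integrable_const 1)
      ((measurable_const.indicator (hZ (measurableSet_singleton 1))).aestronglyMeasurable)
      (ae_of_all P fun ω => ?_)
    by_cases h : Z ω = 1 <;> simp [Set.indicator_apply, h]
  -- bounds for φ's
  have hφ1bd : ∀ᵐ ω ∂P, ‖1 / pz (X ω)‖ ≤ 1 / ε := by
    filter_upwards [hpzb] with ω h
    have hpos : 0 < pz (X ω) := hε.trans h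
    rw [Real.norm_eq_abs, abs_of_pos (one_div_pos.mpr hpos)]
    exact one_div_le_one_div_of_le hε h.le
  have hφ2bd : ∀ᵐ ω ∂P, ‖b (X ω) / pz (X ω)‖ ≤ C' / ε := by
    filter_upwards [hpzb] with ω h
    have hpos : 0 < pz (X ω) := hε.trans h
    rw [Real.norm_eq_abs, abs_div, abs_of_pos hpos]
    exact div_le_div₀ hC'0 (hC' _) hε h.le
  have hf1int : Integrable (fun ω => (1 / pz (X ω)) * (χ ω * Dz ω)) P := by
    refine Integrable.mono' (integrable_const ((1 / ε) * 1))
      ((measurable_const.div (hpzm.comp hX)).mul (hχm.mul hDzm)).aestronglyMeasurable ?_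
    filter_upwards [hφ1bd] with ω h
    rw [norm_mul]
    exact mul_le_mul h (hχDz ω) (norm_nonneg _) (by positivity)
  have hf2int : Integrable (fun ω => (b (X ω) / pz (X ω)) * χ ω) P := by
    refine Integrable.mono' (integrable_const ((C' / ε) * 1))
      (((hb.comp hX).div (hpzm.comp hX)).mul hχm).aestronglyMeasurable ?_
    filter_upwards [hφ2bd] with ω h
    rw [norm_mul]
    exact mul_le_mul h (hχb ω) (norm_nonneg _) (by positivity)
  -- measurable sets etc.
  have htmeas : MeasurableSet (if z = 1 then {p : ℝ × ℝ | p.2 = 1} else {p : ℝ × ℝ | p.1 = 1}) := by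
    by_cases h1 : z = 1 <;> simp only [h1, if_true, if_false] <;>
      [exact measurable_snd (measurableSet_singleton 1);
       exact measurable_fst (measurableSet_singleton 1)]
  have hDzset : MeasurableSet {ω | Dz ω = 1} := hDzm (measurableSet_singleton 1)
  -- now the conditional expectation facts
  have hm : MeasurableSpace.comap X (inferInstance : MeasurableSpace 𝒳) ≤ _ := hX.comap_le
  have hχcond : (P[χ | MeasurableSpace.comap X inferInstance]) =ᵐ[P] fun ω => pz (X ω) := by
    rcases hz with hz0 | hz1
    · -- z = 0
      have hzne : ¬ (z = 1) := by rw [hz0]; norm_num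
      have hχeq : χ = (fun _ => (1 : ℝ)) -
          ({ω | Z ω = 1} : Set Ω).indicator (fun _ => (1 : ℝ)) := by
        funext ω
        rcases hZ01 ω with h | h <;>
          simp [hχdef, h, hz0, Set.indicator_apply, Pi.sub_apply]
      rw [hχeq]
      refine (condExp_sub (μ := P) (m := MeasurableSpace.comap X inferInstance) (integrable_const (1 : ℝ)) hindint).trans ?_
      rw [condExp_const hm (1 : ℝ)]
      filter_upwards [hπ.2] with ω hω
      simp only [Pi.sub_apply, hpzdef, if_neg hzne]
      rw [← hω]
    · -- z = 1
      have hχeq : χ = ({ω | Z ω = 1} : Set Ω).indicator (fun _ => (1 : ℝ)) := by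
        funext ω; simp [hχdef, hz1, Set.indicator_apply]
      rw [hχeq]
      filter_upwards [hπ.2] with ω hω
      rw [← hω]
      simp only [hpzdef, if_pos hz1]
  -- conditional independence: s = {z}, t = event "Dz = 1"
  set t : Set (ℝ × ℝ) := if z = 1 then {p : ℝ × ℝ | p.2 = 1} else {p : ℝ × ℝ | p.1 = 1} with htdef
  have hindZ : ∀ ω, ({z} : Set ℝ).indicator (fun _ => (1 : ℝ)) (Z ω) = χ ω := by
    intro ω; by_cases h : Z ω = z <;> simp [Set.indicator_apply, h, hχdef]
  have hindD : ∀ ω, t.indicator (fun _ => (1 : ℝ)) (D0 ω, D1 ω) = Dz ω := by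
    intro ω
    by_cases h1 : z = 1 <;> simp only [htdef, hDzdef, h1, if_true, if_false]
    · rcases hD1_01 ω with h | h <;> simp [Set.indicator_apply, h]
    · rcases hD0_01 ω with h | h <;> simp [Set.indicator_apply, h]
  have hignst := hign {z} t (measurableSet_singleton z) htmeas
  have heq1 : (fun ω => ({z} : Set ℝ).indicator (fun _ => (1 : ℝ)) (Z ω) *
      t.indicator (fun _ => (1 : ℝ)) ((fun ω => (D0 ω, D1 ω)) ω)) = fun ω => χ ω * Dz ω := by
    funext ω; rw [hindZ ω]; simp only; rw [hindD ω]
  have heq2 : (fun ω' => ({z} : Set ℝ).indicator (fun _ => (1 : ℝ)) (Z ω')) = χ := by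
    funext ω; exact hindZ ω
  have heq3 : (fun ω' => t.indicator (fun _ => (1 : ℝ)) ((fun ω => (D0 ω, D1 ω)) ω')) = Dz := by
    funext ω; exact hindD ω
  rw [heq1, heq2, heq3] at hignst
  -- rewrite the integrand
  have hchiD : ∀ ω, χ ω * Dobs Z D0 D1 ω = χ ω * Dz ω := by
    intro ω
    by_cases h : Z ω = z
    · have hχ1 : χ ω = 1 := if_pos h
      rw [hχ1, one_mul, one_mul]
      show Z ω * D1 ω + (1 - Z ω) * D0 ω = if z = 1 then D1 ω else D0 ω
      rcases hz with hz0 | hz1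
      · have hzne : ¬ (z = 1) := by rw [hz0]; norm_num
        rw [if_neg hzne]
        rw [hz0] at h
        rw [h]; ring
      · rw [if_pos hz1]
        rw [hz1] at h
        rw [h]; ring
    · have hχ0 : χ ω = 0 := if_neg h
      rw [hχ0, zero_mul, zero_mul]
  have hmain : (fun ω => ((if Z ω = z then (1 : ℝ) else 0) * (Dobs Z D0 D1 ω - b (X ω)) /
          (if z = 1 then πf (X ω) else 1 - πf (X ω)) + b (X ω)))
      = fun ω => (1 / pz (X ω)) * (χ ω * Dz ω) - (b (X ω) / pz (X ω)) * χ ω + b (X ω) := by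
    funext ω
    have h1 : (if Z ω = z then (1 : ℝ) else 0) = χ ω := rfl
    have h2 : (if z = 1 then πf (X ω) else 1 - πf (X ω)) = pz (X ω) := rfl
    rw [h1, h2, mul_sub, hchiD ω]
    ring
  rw [hmain]
  have hf12int : Integrable (fun ω => (1 / pz (X ω)) * (χ ω * Dz ω)
      - (b (X ω) / pz (X ω)) * χ ω) P := hf1int.sub hf2int
  rw [integral_add hf12int hbX, integral_sub hf1int hf2int]
  -- first integral
  have hI1 : ∫ ω, (1 / pz (X ω)) * (χ ω * Dz ω) ∂P = (P {ω | Dz ω = 1}).toReal := by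
    rw [integral_mul_condexp_comap P X hX (fun x => 1 / pz x) (1 / ε)
      (measurable_const.div hpzm) hφ1bd _ hδint]
    have hae : (fun ω => (1 / pz (X ω)) * (P[fun ω => χ ω * Dz ω | MeasurableSpace.comap X inferInstance]) ω)
        =ᵐ[P] (P[Dz | MeasurableSpace.comap X inferInstance]) := by
      filter_upwards [hignst, hχcond, hpzb] with ω h1 h2 h3
      have hpne : pz (X ω) ≠ 0 := ne_of_gt (hε.trans h3)
      rw [h1, h2]
      field_simp
    rw [integral_congr_ae hae, integral_condExp hm]
    have hDzind : Dz = ({ω | Dz ω = 1} : Set Ω).indicator (fun _ => (1 : ℝ)) := by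
      funext ω
      rcases hDz01 ω with h | h <;> simp [Set.indicator_apply, h]
    conv_lhs => rw [hDzind]
    rw [integral_indicator_const (1 : ℝ) hDzset, smul_eq_mul, mul_one]
    rfl
  -- second integral
  have hI2 : ∫ ω, (b (X ω) / pz (X ω)) * χ ω ∂P = ∫ ω, b (X ω) ∂P := by
    rw [integral_mul_condexp_comap P X hX (fun x => b x / pz x) (C' / ε)
      (hb.div hpzm) hφ2bd _ hχint]
    refine integral_congr_ae ?_
    filter_upwards [hχcond, hpzb] with ω h2 h3
    have hpne : pz (X ω) ≠ 0 := ne_of_gt (hε.trans h3)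
    rw [h2]
    field_simp
  rw [hI1, hI2]
  have hsets : {ω | (if z = 1 then D1 ω else D0 ω) = 1} = {ω | Dz ω = 1} := rfl
  rw [hsets]
  ring

end
end

section
/- Assume the unit-level causal setup with treatment ignorability. Then for each z ∈ {0,1} and every measurable function a : 𝒳 → (ε, 1−ε), E[ 1{Z=z}·(D − p_z(X))/a(X) + p_z(X) ] = P(D(z) = 1). In particular the identity holds for any (possibly misspecified) propensity model a, provided the principal score model p_z is correct. -/
open MeasureTheory ProbabilityTheory Set

noncomputable section

theorem aux_dr {Ω 𝒳 : Type*} [mΩ : MeasurableSpace Ω] [MeasurableSpace 𝒳]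
    (P : Measure Ω) [IsProbabilityMeasure P]
    (X : Ω → 𝒳) (Z Dz : Ω → ℝ)
    (hX : Measurable X) (hZ : Measurable Z) (hDz : Measurable Dz)
    (hDz01 : ∀ ω, Dz ω = 0 ∨ Dz ω = 1)
    (pf : 𝒳 → ℝ) (hpf : Measurable pf)
    (hp : (fun ω => pf (X ω)) =ᵐ[P]
        P[({ω | Dz ω = 1}).indicator (fun _ => (1:ℝ)) | MeasurableSpace.comap X inferInstance])
    (z : ℝ)
    (hci : P[(fun ω => ({ω' | Z ω' = z}).indicator (fun _ => (1:ℝ)) ω *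
              ({ω' | Dz ω' = 1}).indicator (fun _ => (1:ℝ)) ω) |
            MeasurableSpace.comap X inferInstance] =ᵐ[P]
          fun ω => (P[({ω' | Z ω' = z}).indicator (fun _ => (1:ℝ)) |
              MeasurableSpace.comap X inferInstance]) ω *
            (P[({ω' | Dz ω' = 1}).indicator (fun _ => (1:ℝ)) |
              MeasurableSpace.comap X inferInstance]) ω)
    (a : 𝒳 → ℝ) (ha : Measurable a) (ε : ℝ) (hε : 0 < ε) (ha' : ∀ x, ε < a x) :
    ∫ ω, ((if Z ω = z then (1:ℝ) else 0) * (Dz ω - pf (X ω)) / a (X ω) + pf (X ω)) ∂P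
      = (P {ω | Dz ω = 1}).toReal := by
  have hm : MeasurableSpace.comap X (inferInstance : MeasurableSpace 𝒳) ≤ mΩ := hX.comap_le
  haveI : SigmaFinite (P.trim hm) := by
    have : IsFiniteMeasure (P.trim hm) := isFiniteMeasure_trim hm
    infer_instance
  have hS : MeasurableSet[mΩ] {ω' | Z ω' = z} := hZ (measurableSet_singleton z)
  have hA : MeasurableSet[mΩ] {ω | Dz ω = 1} := hDz (measurableSet_singleton 1)
  set IZ : Ω → ℝ := ({ω' | Z ω' = z}).indicator (fun _ => (1:ℝ)) with hIZ_def
  set ID : Ω → ℝ := ({ω | Dz ω = 1}).indicator (fun _ => (1:ℝ)) with hID_def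
  set q : Ω → ℝ := fun ω => pf (X ω) with hq_def
  set g : Ω → ℝ := fun ω => (a (X ω))⁻¹ with hg_def
  -- basic integrability facts
  have hIZ_int : Integrable IZ P := ((integrable_const (1:ℝ) : Integrable _ P)).indicator hS
  have hID_int : Integrable ID P := ((integrable_const (1:ℝ) : Integrable _ P)).indicator hA
  have hq_int : Integrable q P := integrable_condExp.congr hp.symm
  have hIZ_bd : ∀ ω, ‖IZ ω‖ ≤ 1 := by
    intro ω
    by_cases h : ω ∈ {ω' | Z ω' = z} <;> simp [hIZ_def, Set.indicator_apply, h]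
  have hg_bd : ∀ ω, ‖g ω‖ ≤ ε⁻¹ := by
    intro ω
    have h1 : 0 < a (X ω) := lt_trans hε (ha' _)
    rw [hg_def, Real.norm_eq_abs, abs_of_pos (inv_pos.mpr h1)]
    exact inv_anti₀ hε (le_of_lt (ha' _))
  have hg_meas : Measurable[mΩ] g := (ha.comp hX).inv
  -- m-measurability
  have hXm : Measurable[MeasurableSpace.comap X inferInstance] X := fun s hs => ⟨s, hs, rfl⟩
  have hq_m : StronglyMeasurable[MeasurableSpace.comap X inferInstance] q := (hpf.comp hXm).stronglyMeasurable
  have hg_m : StronglyMeasurable[MeasurableSpace.comap X inferInstance] g := ((ha.comp hXm).inv).stronglyMeasurable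
  -- products
  have hIZID_int : Integrable (fun ω => IZ ω * ID ω) P :=
    hID_int.bdd_mul hIZ_int.aestronglyMeasurable (ae_of_all _ hIZ_bd)
  have hqIZ_int : Integrable (q * IZ) P := by
    have h1 : Integrable (fun ω => IZ ω * q ω) P :=
      hq_int.bdd_mul hIZ_int.aestronglyMeasurable (ae_of_all _ hIZ_bd)
    exact h1.congr (Filter.Eventually.of_forall fun ω => mul_comm (IZ ω) (q ω))
  have hh_int : Integrable (fun ω => IZ ω * ID ω - q ω * IZ ω) P := hIZID_int.sub hqIZ_int
  have hgh_int : Integrable (fun ω => g ω * (IZ ω * ID ω - q ω * IZ ω)) P :=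
    hh_int.bdd_mul hg_meas.aestronglyMeasurable (ae_of_all _ hg_bd)
  -- the conditional expectation of the inner part vanishes
  have hzero : P[(fun ω => IZ ω * ID ω - q ω * IZ ω) | MeasurableSpace.comap X inferInstance] =ᵐ[P] fun _ => (0:ℝ) := by
    have h1 : P[(fun ω => IZ ω * ID ω - q ω * IZ ω) | MeasurableSpace.comap X inferInstance] =ᵐ[P]
        P[(fun ω => IZ ω * ID ω) | MeasurableSpace.comap X inferInstance] - P[q * IZ | MeasurableSpace.comap X inferInstance] := condExp_sub hIZID_int hqIZ_int _
    have h3 : P[q * IZ | MeasurableSpace.comap X inferInstance] =ᵐ[P] q * P[IZ | MeasurableSpace.comap X inferInstance] :=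
      condExp_mul_of_stronglyMeasurable_left hq_m hqIZ_int hIZ_int
    filter_upwards [h1, hci, h3, hp] with ω e1 e2 e3 e4
    simp only [Pi.sub_apply, Pi.mul_apply] at e1 e3
    rw [e1, e2, e3, ← e4]
    ring
  have hce0 : P[(fun ω => g ω * (IZ ω * ID ω - q ω * IZ ω)) | MeasurableSpace.comap X inferInstance] =ᵐ[P] fun _ => (0:ℝ) := by
    have h1 : P[g * (fun ω => IZ ω * ID ω - q ω * IZ ω) | MeasurableSpace.comap X inferInstance] =ᵐ[P]
        g * P[(fun ω => IZ ω * ID ω - q ω * IZ ω) | MeasurableSpace.comap X inferInstance] :=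
      condExp_mul_of_stronglyMeasurable_left hg_m hgh_int hh_int
    filter_upwards [h1, hzero] with ω e1 e2
    simp only [Pi.mul_apply] at e1
    rw [show (fun ω => g ω * (IZ ω * ID ω - q ω * IZ ω)) =
        g * (fun ω => IZ ω * ID ω - q ω * IZ ω) from rfl]
    rw [e1, e2, mul_zero]
  have hint0 : ∫ ω, g ω * (IZ ω * ID ω - q ω * IZ ω) ∂P = 0 := by
    rw [← integral_condExp hm, integral_congr_ae hce0, integral_zero]
  -- pointwise identification of the integrand
  have key : ∀ ω, (if Z ω = z then (1:ℝ) else 0) * (Dz ω - pf (X ω)) / a (X ω) + pf (X ω)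
      = g ω * (IZ ω * ID ω - q ω * IZ ω) + q ω := by
    intro ω
    have hIDe : ID ω = Dz ω := by
      rcases hDz01 ω with h | h <;>
        simp [hID_def, Set.indicator_apply, Set.mem_setOf_eq, h]
    have hIZe : IZ ω = if Z ω = z then (1:ℝ) else 0 := by
      simp [hIZ_def, Set.indicator_apply, Set.mem_setOf_eq]
    rw [← hIZe, hIDe]
    show IZ ω * (Dz ω - pf (X ω)) / a (X ω) + pf (X ω)
        = (a (X ω))⁻¹ * (IZ ω * Dz ω - pf (X ω) * IZ ω) + pf (X ω)
    ring
  rw [integral_congr_ae (Filter.Eventually.of_forall key),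
    integral_add hgh_int hq_int, hint0, zero_add,
    integral_congr_ae hp, integral_condExp hm]
  exact integral_indicator_one (μ := P) hA


variable {Ω 𝒳 : Type*} [MeasurableSpace Ω] [MeasurableSpace 𝒳]

/-- **Doubly robust estimation of `P(D(z)=1)`: correct principal score, arbitrary propensity
model `a`.** Under treatment ignorability, for `z ∈ {0,1}` and any measurable
`a : 𝒳 → (ε, 1−ε)`,
`E[ 1{Z=z}·(D − p_z(X))/a(X) + p_z(X) ] = P(D(z) = 1)`. -/
theorem dr_identity_correct_principal_score [StandardBorelSpace 𝒳]
    (P : Measure Ω) [IsProbabilityMeasure P]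
    (X : Ω → 𝒳) (Z D0 D1 : Ω → ℝ)
    (hX : Measurable X) (hZ : Measurable Z) (hD0 : Measurable D0) (hD1 : Measurable D1)
    (hZ01 : ∀ ω, Z ω = 0 ∨ Z ω = 1)
    (hD0_01 : ∀ ω, D0 ω = 0 ∨ D0 ω = 1) (hD1_01 : ∀ ω, D1 ω = 0 ∨ D1 ω = 1)
    -- p_z is a σ(X)-measurable version of P(D(z)=1 | σ(X)), for z ∈ {0,1}
    (p0f p1f : 𝒳 → ℝ)
    (hp0 : IsCondProb P X {ω | D0 ω = 1} p0f) (hp1 : IsCondProb P X {ω | D1 ω = 1} p1f)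
    -- treatment ignorability: Z ⫫ (D(0), D(1)) | σ(X)
    (hign : CondIndepGiven P X Z (fun ω => (D0 ω, D1 ω)))
    -- a fixed constant ε ∈ (0, 1/2)
    (ε : ℝ) (hε : 0 < ε) (hε' : ε < 1 / 2)
    (z : ℝ) (hz : z = 0 ∨ z = 1)
    -- an arbitrary measurable (possibly misspecified) propensity model with values in (ε, 1−ε)
    (a : 𝒳 → ℝ) (ha : Measurable a) (ha' : ∀ x, ε < a x ∧ a x < 1 - ε) :
    ∫ ω, ((if Z ω = z then (1 : ℝ) else 0) *
          (Dobs Z D0 D1 ω - (if z = 1 then p1f (X ω) else p0f (X ω))) / a (X ω) +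
          (if z = 1 then p1f (X ω) else p0f (X ω))) ∂P
      = (P {ω | (if z = 1 then D1 ω else D0 ω) = 1}).toReal := by
  rcases hz with hz | hz
  · subst hz
    simp only [if_neg (by norm_num : ¬(0:ℝ) = 1)]
    have hDobs : ∀ ω, (if Z ω = (0:ℝ) then (1:ℝ) else 0) * (Dobs Z D0 D1 ω - p0f (X ω)) / a (X ω)
          + p0f (X ω)
        = (if Z ω = (0:ℝ) then (1:ℝ) else 0) * (D0 ω - p0f (X ω)) / a (X ω) + p0f (X ω) := by
      intro ω; by_cases h : Z ω = 0
      · simp [Dobs, h]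
      · simp [h]
    rw [integral_congr_ae (Filter.Eventually.of_forall hDobs)]
    have e1 : (fun ω => ({(0:ℝ)} : Set ℝ).indicator (fun _ => (1:ℝ)) (Z ω))
        = ({ω' | Z ω' = (0:ℝ)}).indicator (fun _ => (1:ℝ)) := by
      funext ω; by_cases h : Z ω = 0 <;> simp [Set.indicator_apply, h]
    have e2 : (fun ω => (({(1:ℝ)} ×ˢ (univ : Set ℝ)) : Set (ℝ × ℝ)).indicator
          (fun _ => (1:ℝ)) (D0 ω, D1 ω))
        = ({ω' | D0 ω' = 1}).indicator (fun _ => (1:ℝ)) := by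
      funext ω; by_cases h : D0 ω = 1 <;> simp [Set.indicator_apply, h, eq_comm]
    have e3 : (fun ω => ({(0:ℝ)} : Set ℝ).indicator (fun _ => (1:ℝ)) (Z ω) *
          (({(1:ℝ)} ×ˢ (univ : Set ℝ)) : Set (ℝ × ℝ)).indicator (fun _ => (1:ℝ)) (D0 ω, D1 ω))
        = fun ω => ({ω' | Z ω' = (0:ℝ)}).indicator (fun _ => (1:ℝ)) ω *
          ({ω | D0 ω = 1}).indicator (fun _ => (1:ℝ)) ω := by
      funext ω
      by_cases h : Z ω = 0 <;> by_cases h' : D0 ω = 1 <;> simp [Set.indicator_apply, h, h', eq_comm]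
    have hci := hign {(0:ℝ)} ({(1:ℝ)} ×ˢ (univ : Set ℝ)) (measurableSet_singleton 0)
      ((measurableSet_singleton 1).prod MeasurableSet.univ)
    simp only [e1, e2, e3] at hci
    exact aux_dr P X Z D0 hX hZ hD0 hD0_01 p0f hp0.1 hp0.2 0 hci a ha ε hε (fun x => (ha' x).1)
  · subst hz
    simp only [eq_self_iff_true, if_true]
    have hDobs : ∀ ω, (if Z ω = (1:ℝ) then (1:ℝ) else 0) * (Dobs Z D0 D1 ω - p1f (X ω)) / a (X ω)
          + p1f (X ω)
        = (if Z ω = (1:ℝ) then (1:ℝ) else 0) * (D1 ω - p1f (X ω)) / a (X ω) + p1f (X ω) := by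
      intro ω; by_cases h : Z ω = 1
      · simp [Dobs, h]
      · simp [h]
    rw [integral_congr_ae (Filter.Eventually.of_forall hDobs)]
    have e1 : (fun ω => ({(1:ℝ)} : Set ℝ).indicator (fun _ => (1:ℝ)) (Z ω))
        = ({ω' | Z ω' = (1:ℝ)}).indicator (fun _ => (1:ℝ)) := by
      funext ω; by_cases h : Z ω = 1 <;> simp [Set.indicator_apply, h]
    have e2 : (fun ω => (((univ : Set ℝ) ×ˢ {(1:ℝ)}) : Set (ℝ × ℝ)).indicator
          (fun _ => (1:ℝ)) (D0 ω, D1 ω))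
        = ({ω' | D1 ω' = 1}).indicator (fun _ => (1:ℝ)) := by
      funext ω; by_cases h : D1 ω = 1 <;> simp [Set.indicator_apply, h, eq_comm]
    have e3 : (fun ω => ({(1:ℝ)} : Set ℝ).indicator (fun _ => (1:ℝ)) (Z ω) *
          (((univ : Set ℝ) ×ˢ {(1:ℝ)}) : Set (ℝ × ℝ)).indicator (fun _ => (1:ℝ)) (D0 ω, D1 ω))
        = fun ω => ({ω' | Z ω' = (1:ℝ)}).indicator (fun _ => (1:ℝ)) ω *
          ({ω | D1 ω = 1}).indicator (fun _ => (1:ℝ)) ω := by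
      funext ω
      by_cases h : Z ω = 1 <;> by_cases h' : D1 ω = 1 <;> simp [Set.indicator_apply, h, h', eq_comm]
    have hci := hign ({(1:ℝ)} : Set ℝ) ((univ : Set ℝ) ×ˢ {(1:ℝ)}) (measurableSet_singleton 1)
      (MeasurableSet.univ.prod (measurableSet_singleton 1))
    simp only [e1, e2, e3] at hci
    exact aux_dr P X Z D1 hX hZ hD1 hD1_01 p1f hp1.1 hp1.2 1 hci a ha ε hε (fun x => (ha' x).1)

end
end

section
/- Assume the pairwise causal setup with treatment ignorability, monotonicity, overlap, and pairwise principal ignorability for stratum 10. Then the propensity-score-and-principal-score weighting identification formula holds: E[ (Z₁·D₁·e_10(X₁)/(π(X₁)·p_1(X₁))) · ((1−Z₂)(1−D₂)·e_10(X₂)/((1−π(X₂))(1−p_0(X₂)))) · h(Y₁, Y₂) ] = τ_{h,N}^{10}, where τ_{h,N}^{10} = E[h(Y₁(1), Y₂(0))·1{S₁=10}·1{S₂=10}]. -/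
open MeasureTheory ProbabilityTheory Set

noncomputable section

variable {Ω 𝒳 : Type*} [MeasurableSpace Ω] [MeasurableSpace 𝒳]

/-- Observed outcome `Y = Z·Y(1) + (1−Z)·Y(0)`. -/
def Yobs (Z Y0 Y1 : Ω → ℝ) (ω : Ω) : ℝ := Z ω * Y1 ω + (1 - Z ω) * Y0 ω

/-- Indicator of the principal stratum `S = (D(1), D(0)) = s`. -/
def strat (D0 D1 : Ω → ℝ) (s : ℝ × ℝ) (ω : Ω) : ℝ := if (D1 ω, D0 ω) = s then 1 else 0

/-- Weight `w⁺(O) = Z·D·e_10(X)/(π(X)·p_1(X))`, with `e_10 = p_1 − p_0`. -/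
def wplus (πf p0f p1f : 𝒳 → ℝ) (X : Ω → 𝒳) (Z D : Ω → ℝ) (ω : Ω) : ℝ :=
  Z ω * D ω * (p1f (X ω) - p0f (X ω)) / (πf (X ω) * p1f (X ω))

/-- Weight `w⁻(O) = (1−Z)(1−D)·e_10(X)/((1−π(X))(1−p_0(X)))`. -/
def wminus (πf p0f p1f : 𝒳 → ℝ) (X : Ω → 𝒳) (Z D : Ω → ℝ) (ω : Ω) : ℝ :=
  (1 - Z ω) * (1 - D ω) * (p1f (X ω) - p0f (X ω)) /
    ((1 - πf (X ω)) * (1 - p0f (X ω)))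

/-- `ψ_{D₁}(O) = Z(D − p_1(X))/π(X) + p_1(X)`. -/
def psiD1 (πf p1f : 𝒳 → ℝ) (X : Ω → 𝒳) (Z D : Ω → ℝ) (ω : Ω) : ℝ :=
  Z ω * (D ω - p1f (X ω)) / πf (X ω) + p1f (X ω)

/-- `ψ_{D₀}(O) = (1−Z)(D − p_0(X))/(1−π(X)) + p_0(X)`. -/
def psiD0 (πf p0f : 𝒳 → ℝ) (X : Ω → 𝒳) (Z D : Ω → ℝ) (ω : Ω) : ℝ :=
  (1 - Z ω) * (D ω - p0f (X ω)) / (1 - πf (X ω)) + p0f (X ω)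

/-- `ψ_Δ(O) = ψ_{D₁}(O) − ψ_{D₀}(O)`. -/
def psiDelta (πf p0f p1f : 𝒳 → ℝ) (X : Ω → 𝒳) (Z D : Ω → ℝ) (ω : Ω) : ℝ :=
  psiD1 πf p1f X Z D ω - psiD0 πf p0f X Z D ω

/-- Pairwise outcome mean `μ_1100(x₁, x₂) = ∫∫ h(u,v) F_{11}(du|x₁) F_{00}(dv|x₂)`. -/
def mu1100 (F : Kernel (ℝ × ℝ × 𝒳) ℝ) (h : ℝ → ℝ → ℝ) (x₁ x₂ : 𝒳) : ℝ :=
  ∫ u, ∫ v, h u v ∂(F (0, 0, x₂)) ∂(F (1, 1, x₁))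

/-- `F` is a regular conditional distribution of `Y` given `W = (Z, D, X)`: a Markov kernel
whose evaluations along `W` form versions of the conditional probabilities
`P(Y ∈ A | σ(Z, D, X))`. -/
def IsRegCondDistrib (P : Measure Ω) (Y : Ω → ℝ) (W : Ω → ℝ × ℝ × 𝒳)
    (F : Kernel (ℝ × ℝ × 𝒳) ℝ) : Prop :=
  IsMarkovKernel F ∧
    ∀ A : Set ℝ, MeasurableSet A →
      (fun ω => (F (W ω) A).toReal) =ᵐ[P]
        P[(fun ω => A.indicator (fun _ => (1 : ℝ)) (Y ω)) |
          MeasurableSpace.comap W inferInstance]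

/-- **Pairwise principal ignorability for stratum 10**: there is a `σ(X₁,X₂)`-measurable
function `μ̄` such that for every latent strata pair
`(s₁,s₂) ∈ {(10,10),(10,00),(11,10),(11,00)}`, almost surely
`E[h(Y₁(1), Y₂(0))·1{S₁=s₁}·1{S₂=s₂} | σ(X₁,X₂)] = μ̄(X₁,X₂)·P(S₁=s₁, S₂=s₂ | σ(X₁,X₂))`
on the product space carrying the two independent copies. -/
def PPI10 (P : Measure Ω) (X : Ω → 𝒳) (D0 D1 Y0 Y1 : Ω → ℝ) (h : ℝ → ℝ → ℝ)
    (μbar : 𝒳 × 𝒳 → ℝ) : Prop :=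
  Measurable μbar ∧
    ∀ s₁ s₂ : ℝ × ℝ, (s₁ = (1, 0) ∨ s₁ = (1, 1)) → (s₂ = (1, 0) ∨ s₂ = (0, 0)) →
      (P.prod P)[(fun p => h (Y1 p.1) (Y0 p.2) * strat D0 D1 s₁ p.1 * strat D0 D1 s₂ p.2) |
          MeasurableSpace.comap (fun p : Ω × Ω => (X p.1, X p.2)) inferInstance]
        =ᵐ[P.prod P]
      fun p => μbar (X p.1, X p.2) *
        ((P.prod P)[(fun q => strat D0 D1 s₁ q.1 * strat D0 D1 s₂ q.2) |
          MeasurableSpace.comap (fun p : Ω × Ω => (X p.1, X p.2)) inferInstance]) p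

/-- `τ_{h,N}^{10} = E[h(Y₁(1), Y₂(0))·1{S₁=10}·1{S₂=10}]`, the unnormalized principal
generalized causal effect for stratum 10, on the product space carrying the two
independent copies. -/
def tauN10 (P : Measure Ω) (D0 D1 Y0 Y1 : Ω → ℝ) (h : ℝ → ℝ → ℝ) : ℝ :=
  ∫ p, h (Y1 p.1) (Y0 p.2) * strat D0 D1 (1, 0) p.1 * strat D0 D1 (1, 0) p.2 ∂(P.prod P)

section Helpers

open scoped ENNReal NNReal

lemma integrable_of_bdd {α : Type*} [MeasurableSpace α] {μ : Measure α} [IsFiniteMeasure μ]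
    {f : α → ℝ} (hf : AEStronglyMeasurable f μ) {C : ℝ} (h : ∀ x, |f x| ≤ C) :
    Integrable f μ :=
  Integrable.mono' (integrable_const C) hf (ae_of_all _ (by simpa [Real.norm_eq_abs] using h))

lemma abs_mul_le {a b A B : ℝ} (ha : |a| ≤ A) (hb : |b| ≤ B) : |a * b| ≤ A * B := by
  rw [abs_mul]
  exact mul_le_mul ha hb (abs_nonneg _) ((abs_nonneg a).trans ha)

lemma ind_abs_le_one {α : Type*} (s : Set α) (x : α) :
    |s.indicator (fun _ => (1:ℝ)) x| ≤ 1 := by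
  classical
  by_cases h : x ∈ s <;> simp [h]

/-- Key conditional-independence fact: integrating out a treatment indicator against any
bounded measurable function of `(V, X)` replaces it by the propensity `w ∘ X`. -/
lemma zfact (P : Measure Ω) [IsProbabilityMeasure P] (X : Ω → 𝒳) (hX : Measurable X)
    {β : Type*} [MeasurableSpace β] (V : Ω → β) (hV : Measurable V)
    (Z : Ω → ℝ) (hZ : Measurable Z)
    (s : Set ℝ) (hs : MeasurableSet s)
    {w : 𝒳 → ℝ} (hw : Measurable w) (hw0 : ∀ x, 0 ≤ w x) (hw1 : ∀ x, w x ≤ 1)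
    (hver : (fun ω => w (X ω)) =ᵐ[P]
      P[(fun ω => s.indicator (fun _ => (1:ℝ)) (Z ω)) | MeasurableSpace.comap X inferInstance])
    (hci : ∀ t : Set β, MeasurableSet t →
      P[(fun ω => s.indicator (fun _ => (1:ℝ)) (Z ω) * t.indicator (fun _ => (1:ℝ)) (V ω)) |
          MeasurableSpace.comap X inferInstance]
        =ᵐ[P] fun ω =>
          (P[(fun ω' => s.indicator (fun _ => (1:ℝ)) (Z ω')) |
              MeasurableSpace.comap X inferInstance]) ω *
          (P[(fun ω' => t.indicator (fun _ => (1:ℝ)) (V ω')) |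
              MeasurableSpace.comap X inferInstance]) ω)
    {G : β × 𝒳 → ℝ} (hG : Measurable G) {CG : ℝ} (hGb : ∀ y, |G y| ≤ CG) :
    ∫ ω, s.indicator (fun _ => (1:ℝ)) (Z ω) * G (V ω, X ω) ∂P
      = ∫ ω, w (X ω) * G (V ω, X ω) ∂P := by
  classical
  have hm : MeasurableSpace.comap X inferInstance ≤ (inferInstance : MeasurableSpace Ω) :=
    measurable_iff_comap_le.mp hX
  have hXc : Measurable[MeasurableSpace.comap X inferInstance] X :=
    measurable_iff_comap_le.mpr le_rfl
  have hwX : StronglyMeasurable[MeasurableSpace.comap X inferInstance] (fun ω => w (X ω)) :=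
    (hw.comp hXc).stronglyMeasurable
  have hVX : Measurable (fun ω => (V ω, X ω)) := hV.prodMk hX
  -- the two pushforward measures agree
  have key : Measure.map (fun ω => (V ω, X ω)) (P.restrict (Z ⁻¹' s))
      = Measure.map (fun ω => (V ω, X ω))
          (P.withDensity (fun ω => ENNReal.ofReal (w (X ω)))) := by
    have hfin1 : IsFiniteMeasure (Measure.map (fun ω => (V ω, X ω)) (P.restrict (Z ⁻¹' s))) := by
      constructor
      rw [Measure.map_apply hVX MeasurableSet.univ]
      exact measure_lt_top _ _
    have hfin2 : IsFiniteMeasure (Measure.map (fun ω => (V ω, X ω))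
        (P.withDensity (fun ω => ENNReal.ofReal (w (X ω))))) := by
      constructor
      rw [Measure.map_apply hVX MeasurableSet.univ]
      have hle : (P.withDensity fun ω => ENNReal.ofReal (w (X ω))) univ ≤ 1 := by
        rw [withDensity_apply _ MeasurableSet.univ, Measure.restrict_univ]
        calc ∫⁻ ω, ENNReal.ofReal (w (X ω)) ∂P
            ≤ ∫⁻ ω, (1:ℝ≥0∞) ∂P :=
              lintegral_mono fun ω => ENNReal.ofReal_le_one.mpr (hw1 (X ω))
          _ = 1 := by simp
      exact lt_of_le_of_lt (le_trans (measure_mono (subset_univ _)) hle) ENNReal.one_lt_top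
    -- equality on rectangles
    have hrect : ∀ t : Set β, MeasurableSet t → ∀ B : Set 𝒳, MeasurableSet B →
        Measure.map (fun ω => (V ω, X ω)) (P.restrict (Z ⁻¹' s)) (t ×ˢ B)
          = Measure.map (fun ω => (V ω, X ω))
              (P.withDensity (fun ω => ENNReal.ofReal (w (X ω)))) (t ×ˢ B) := by
      intro t ht B hB
      have hpre : (fun ω => (V ω, X ω)) ⁻¹' (t ×ˢ B) = V ⁻¹' t ∩ X ⁻¹' B := by
        ext ω; simp
      rw [Measure.map_apply hVX (ht.prod hB), Measure.map_apply hVX (ht.prod hB), hpre,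
        Measure.restrict_apply ((hV ht).inter (hX hB)),
        withDensity_apply _ ((hV ht).inter (hX hB))]
      -- real-integral versions
      have hBm : MeasurableSet[MeasurableSpace.comap X inferInstance] (X ⁻¹' B) := ⟨B, hB, rfl⟩
      have hindint : Integrable
          (fun ω => s.indicator (fun _ => (1:ℝ)) (Z ω) * t.indicator (fun _ => (1:ℝ)) (V ω)) P := by
        refine integrable_of_bdd ?_ (C := 1) ?_
        · exact (((measurable_const.indicator hs).comp hZ).mul
            ((measurable_const.indicator ht).comp hV)).aestronglyMeasurable
        · intro ω
          simpa using abs_mul_le (ind_abs_le_one s (Z ω)) (ind_abs_le_one t (V ω))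
      have htind_int : Integrable (fun ω => t.indicator (fun _ => (1:ℝ)) (V ω)) P := by
        refine integrable_of_bdd
          ((measurable_const.indicator ht).comp hV).aestronglyMeasurable (C := 1) fun ω => ?_
        exact ind_abs_le_one t (V ω)
      have hwtind_int : Integrable (fun ω => w (X ω) * t.indicator (fun _ => (1:ℝ)) (V ω)) P := by
        refine integrable_of_bdd ((hw.comp hX).mul
          ((measurable_const.indicator ht).comp hV)).aestronglyMeasurable (C := 1 * 1) fun ω => ?_
        refine abs_mul_le ?_ (ind_abs_le_one t (V ω))
        rw [abs_le]; exact ⟨by linarith [hw0 (X ω)], hw1 (X ω)⟩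
      -- the central conditional-expectation computation
      have hmain : ∫ ω in X ⁻¹' B,
            s.indicator (fun _ => (1:ℝ)) (Z ω) * t.indicator (fun _ => (1:ℝ)) (V ω) ∂P
          = ∫ ω in X ⁻¹' B, w (X ω) * t.indicator (fun _ => (1:ℝ)) (V ω) ∂P := by
        rw [← setIntegral_condExp hm hindint hBm, ← setIntegral_condExp hm hwtind_int hBm]
        refine setIntegral_congr_ae (hm _ hBm) ?_
        have hpull := condExp_mul_of_stronglyMeasurable_left hwX hwtind_int htind_int
        have hpull' : P[(fun ω => w (X ω) * t.indicator (fun _ => (1:ℝ)) (V ω)) |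
            MeasurableSpace.comap X inferInstance] =ᵐ[P]
            fun ω => w (X ω) * (P[(fun ω' => t.indicator (fun _ => (1:ℝ)) (V ω')) |
              MeasurableSpace.comap X inferInstance]) ω := hpull
        filter_upwards [hci t ht, hver, hpull'] with ω h1 h2 h3 _
        rw [h1, h3, ← h2]
      -- convert LHS to the set-integral form
      have hL : P (V ⁻¹' t ∩ X ⁻¹' B ∩ Z ⁻¹' s)
          = ENNReal.ofReal (∫ ω in X ⁻¹' B,
              s.indicator (fun _ => (1:ℝ)) (Z ω) * t.indicator (fun _ => (1:ℝ)) (V ω) ∂P) := by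
        have hpt : ∀ ω, s.indicator (fun _ => (1:ℝ)) (Z ω) * t.indicator (fun _ => (1:ℝ)) (V ω)
            = (Z ⁻¹' s ∩ V ⁻¹' t).indicator (fun _ => (1:ℝ)) ω := by
          intro ω
          simp only [Set.indicator_apply, Set.mem_inter_iff, Set.mem_preimage]
          by_cases h1 : Z ω ∈ s <;> by_cases h2 : V ω ∈ t <;> simp [h1, h2]
        rw [setIntegral_congr_fun (hX hB) (fun ω _ => hpt ω),
          setIntegral_indicator ((hZ hs).inter (hV ht))]
        rw [setIntegral_const, smul_eq_mul, mul_one, ofReal_measureReal]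
        congr 1
        ext ω; simp [Set.mem_inter_iff]; tauto
      -- convert RHS to the set-integral form
      have hR : ∫⁻ ω in V ⁻¹' t ∩ X ⁻¹' B, ENNReal.ofReal (w (X ω)) ∂P
          = ENNReal.ofReal (∫ ω in X ⁻¹' B,
              w (X ω) * t.indicator (fun _ => (1:ℝ)) (V ω) ∂P) := by
        have h1 : ∫ ω in X ⁻¹' B, w (X ω) * t.indicator (fun _ => (1:ℝ)) (V ω) ∂P
            = ∫ ω in V ⁻¹' t ∩ X ⁻¹' B, w (X ω) ∂P := by
          have hpt : ∀ ω, w (X ω) * t.indicator (fun _ => (1:ℝ)) (V ω)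
              = (V ⁻¹' t).indicator (fun ω => w (X ω)) ω := by
            intro ω
            simp only [Set.indicator_apply, Set.mem_preimage]
            by_cases h2 : V ω ∈ t <;> simp [h2]
          rw [setIntegral_congr_fun (hX hB) (fun ω _ => hpt ω),
            setIntegral_indicator (hV ht)]
          congr 1
          rw [Set.inter_comm]
        rw [h1, ofReal_integral_eq_lintegral_ofReal]
        · exact (integrable_of_bdd (hw.comp hX).aestronglyMeasurable (C := 1)
            (fun ω => by
              simp only [Function.comp_apply]
              rw [abs_le]; exact ⟨by linarith [hw0 (X ω)], hw1 (X ω)⟩)).integrableOn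
        · exact ae_of_all _ fun ω => hw0 (X ω)
      rw [hL, hR, hmain]
    refine MeasureTheory.ext_of_generate_finite _ generateFrom_prod.symm isPiSystem_prod ?_ ?_
    · rintro u ⟨t, ht, B, hB, rfl⟩
      exact hrect t ht B hB
    · simpa using hrect univ MeasurableSet.univ univ MeasurableSet.univ
  -- transfer integrals along the measure equality
  have hGb' : AEStronglyMeasurable G (Measure.map (fun ω => (V ω, X ω)) (P.restrict (Z ⁻¹' s))) :=
    hG.aestronglyMeasurable
  calc ∫ ω, s.indicator (fun _ => (1:ℝ)) (Z ω) * G (V ω, X ω) ∂P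
      = ∫ ω, (Z ⁻¹' s).indicator (fun ω => G (V ω, X ω)) ω ∂P := by
        refine integral_congr_ae (ae_of_all _ fun ω => ?_)
        simp only [Set.indicator_apply, Set.mem_preimage]
        by_cases h1 : Z ω ∈ s <;> simp [h1]
    _ = ∫ ω in Z ⁻¹' s, G (V ω, X ω) ∂P := integral_indicator (hZ hs)
    _ = ∫ y, G y ∂(Measure.map (fun ω => (V ω, X ω)) (P.restrict (Z ⁻¹' s))) :=
        (integral_map hVX.aemeasurable hG.aestronglyMeasurable).symm
    _ = ∫ y, G y ∂(Measure.map (fun ω => (V ω, X ω))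
          (P.withDensity (fun ω => ENNReal.ofReal (w (X ω))))) := by rw [key]
    _ = ∫ ω, G (V ω, X ω) ∂(P.withDensity (fun ω => ENNReal.ofReal (w (X ω)))) :=
        integral_map hVX.aemeasurable hG.aestronglyMeasurable
    _ = ∫ ω, w (X ω) * G (V ω, X ω) ∂P := by
        have hd : Measurable (fun ω => Real.toNNReal (w (X ω))) :=
          (hw.comp hX).real_toNNReal
        have heq : (fun ω => ENNReal.ofReal (w (X ω)))
            = fun ω => ((Real.toNNReal (w (X ω)) : ℝ≥0) : ℝ≥0∞) := rfl
        rw [heq, integral_withDensity_eq_integral_smul hd]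
        refine integral_congr_ae (ae_of_all _ fun ω => ?_)
        simp [NNReal.smul_def, Real.coe_toNNReal _ (hw0 (X ω))]


/-- Two-fold replacement of unit-level factors by their `X`-conditional versions,
on the product space. -/
lemma prod_step (P : Measure Ω) [IsProbabilityMeasure P]
    {γ : Type*} [MeasurableSpace γ] (T : Ω → γ) (hT : Measurable T)
    {φ₁ φ₂ : Ω → ℝ} (hφ₁m : Measurable φ₁) (hφ₂m : Measurable φ₂)
    {C₁ C₂ : ℝ} (hφ₁b : ∀ ω, |φ₁ ω| ≤ C₁) (hφ₂b : ∀ ω, |φ₂ ω| ≤ C₂)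
    {u₁ u₂ : γ → ℝ} (hu₁ : Measurable u₁) (hu₂ : Measurable u₂)
    {Cu₁ Cu₂ : ℝ} (hu₁b : ∀ y, |u₁ y| ≤ Cu₁) (hu₂b : ∀ y, |u₂ y| ≤ Cu₂)
    (fact₁ : ∀ g : γ → ℝ, Measurable g → ∀ C : ℝ, (∀ y, |g y| ≤ C) →
        ∫ ω, φ₁ ω * g (T ω) ∂P = ∫ ω, u₁ (T ω) * g (T ω) ∂P)
    (fact₂ : ∀ g : γ → ℝ, Measurable g → ∀ C : ℝ, (∀ y, |g y| ≤ C) →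
        ∫ ω, φ₂ ω * g (T ω) ∂P = ∫ ω, u₂ (T ω) * g (T ω) ∂P)
    {G : γ × γ → ℝ} (hG : Measurable G) {CG : ℝ} (hGb : ∀ y, |G y| ≤ CG) :
    ∫ p, φ₁ p.1 * φ₂ p.2 * G (T p.1, T p.2) ∂(P.prod P)
      = ∫ p, u₁ (T p.1) * u₂ (T p.2) * G (T p.1, T p.2) ∂(P.prod P) := by
  have hne : Nonempty Ω := by
    by_contra hc
    rw [not_nonempty_iff] at hc
    have h1 : (P univ) = 1 := measure_univ
    rw [Set.univ_eq_empty_iff.mpr hc, measure_empty] at h1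
    exact zero_ne_one h1
  have hγ : Nonempty γ := ⟨T (Classical.arbitrary Ω)⟩
  have hCG0 : 0 ≤ CG := le_trans (abs_nonneg _) (hGb (Classical.arbitrary _))
  have hC₁0 : 0 ≤ C₁ := le_trans (abs_nonneg _) (hφ₁b (Classical.arbitrary _))
  have hC₂0 : 0 ≤ C₂ := le_trans (abs_nonneg _) (hφ₂b (Classical.arbitrary _))
  have hCu₁0 : 0 ≤ Cu₁ := le_trans (abs_nonneg _) (hu₁b (Classical.arbitrary _))
  have hCu₂0 : 0 ≤ Cu₂ := le_trans (abs_nonneg _) (hu₂b (Classical.arbitrary _))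
  -- integrability of the two product integrands
  have hint1 : Integrable (fun p : Ω × Ω => φ₁ p.1 * φ₂ p.2 * G (T p.1, T p.2)) (P.prod P) := by
    refine integrable_of_bdd ?_ (C := C₁ * C₂ * CG) fun p =>
      abs_mul_le (abs_mul_le (hφ₁b _) (hφ₂b _)) (hGb _)
    exact (((hφ₁m.comp measurable_fst).mul (hφ₂m.comp measurable_snd)).mul
      (hG.comp ((hT.comp measurable_fst).prodMk (hT.comp measurable_snd)))).aestronglyMeasurable
  have hint2 : Integrable (fun p : Ω × Ω => u₁ (T p.1) * u₂ (T p.2) * G (T p.1, T p.2))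
      (P.prod P) := by
    refine integrable_of_bdd ?_ (C := Cu₁ * Cu₂ * CG) fun p =>
      abs_mul_le (abs_mul_le (hu₁b _) (hu₂b _)) (hGb _)
    exact ((((hu₁.comp hT).comp measurable_fst).mul ((hu₂.comp hT).comp measurable_snd)).mul
      (hG.comp ((hT.comp measurable_fst).prodMk (hT.comp measurable_snd)))).aestronglyMeasurable
  -- the intermediate kernel H
  set H : γ → ℝ := fun a => ∫ ω₂, u₂ (T ω₂) * G (a, T ω₂) ∂P with hHdef
  have hHm : Measurable H := by
    have : StronglyMeasurable (fun q : γ × Ω => u₂ (T q.2) * G (q.1, T q.2)) :=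
      (((hu₂.comp hT).comp measurable_snd).mul
        (hG.comp (measurable_fst.prodMk (hT.comp measurable_snd)))).stronglyMeasurable
    exact this.integral_prod_right'.measurable
  have hHb : ∀ a, |H a| ≤ Cu₂ * CG := by
    intro a
    have h1 : ‖∫ ω₂, u₂ (T ω₂) * G (a, T ω₂) ∂P‖ ≤ (Cu₂ * CG) * (P univ).toReal :=
      norm_integral_le_of_norm_le_const (ae_of_all _ fun ω₂ => by
        rw [Real.norm_eq_abs]; exact abs_mul_le (hu₂b _) (hGb _))
    rw [hHdef]
    simpa [Real.norm_eq_abs] using h1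
  -- inner-integral versions
  have inner_int : ∀ ω₁, Integrable (fun ω₂ => φ₂ ω₂ * (φ₁ ω₁ * G (T ω₁, T ω₂))) P := by
    intro ω₁
    refine integrable_of_bdd ?_ (C := C₂ * (|φ₁ ω₁| * CG)) fun ω₂ =>
      abs_mul_le (hφ₂b _) (abs_mul_le le_rfl (hGb _))
    exact (hφ₂m.mul ((measurable_const.mul
      (hG.comp (measurable_const.prodMk (hT.comp measurable_id)))))).aestronglyMeasurable
  calc ∫ p, φ₁ p.1 * φ₂ p.2 * G (T p.1, T p.2) ∂(P.prod P)
      = ∫ ω₁, ∫ ω₂, φ₁ ω₁ * φ₂ ω₂ * G (T ω₁, T ω₂) ∂P ∂P := integral_prod _ hint1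
    _ = ∫ ω₁, φ₁ ω₁ * H (T ω₁) ∂P := by
        refine integral_congr_ae (ae_of_all _ fun ω₁ => ?_)
        dsimp only
        have step1 : ∫ ω₂, φ₁ ω₁ * φ₂ ω₂ * G (T ω₁, T ω₂) ∂P
            = ∫ ω₂, φ₂ ω₂ * (φ₁ ω₁ * G (T ω₁, T ω₂)) ∂P := by
          refine integral_congr_ae (ae_of_all _ fun ω₂ => by ring)
        have step2 := fact₂ (fun a => φ₁ ω₁ * G (T ω₁, a))
          (measurable_const.mul (hG.comp (measurable_const.prodMk measurable_id)))
          (|φ₁ ω₁| * CG) (fun a => abs_mul_le le_rfl (hGb _))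
        have step3 : ∫ ω₂, u₂ (T ω₂) * (φ₁ ω₁ * G (T ω₁, T ω₂)) ∂P
            = φ₁ ω₁ * H (T ω₁) := by
          have hH : H (T ω₁) = ∫ ω₂, u₂ (T ω₂) * G (T ω₁, T ω₂) ∂P := rfl
          rw [hH, ← integral_const_mul]
          exact integral_congr_ae (ae_of_all _ fun ω₂ => by ring)
        rw [step1, step2, step3]
    _ = ∫ ω₁, u₁ (T ω₁) * H (T ω₁) ∂P := fact₁ H hHm (Cu₂ * CG) hHb
    _ = ∫ ω₁, ∫ ω₂, u₁ (T ω₁) * u₂ (T ω₂) * G (T ω₁, T ω₂) ∂P ∂P := by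
        refine integral_congr_ae (ae_of_all _ fun ω₁ => ?_)
        dsimp only
        have hH : H (T ω₁) = ∫ ω₂, u₂ (T ω₂) * G (T ω₁, T ω₂) ∂P := rfl
        rw [hH, ← integral_const_mul]
        exact integral_congr_ae (ae_of_all _ fun ω₂ => by ring)
    _ = ∫ p, u₁ (T p.1) * u₂ (T p.2) * G (T p.1, T p.2) ∂(P.prod P) :=
        (integral_prod _ hint2).symm


/-- Replace `f` by `μt(W)·q` under the integral against an `σ(W)`-measurable multiplier,
given the conditional-expectation identity `E[f|σ(W)] = μt(W)·E[q|σ(W)]`. -/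
lemma condstep {α 𝒲 : Type*} [MeasurableSpace α] [MeasurableSpace 𝒲]
    (Q : Measure α) [IsProbabilityMeasure Q] {W : α → 𝒲} (hW : Measurable W)
    {f q : α → ℝ} (hfm : Measurable f) {Cf : ℝ} (hfb : ∀ a, |f a| ≤ Cf)
    (hqm : Measurable q) {Cq : ℝ} (hqb : ∀ a, |q a| ≤ Cq)
    {μt : 𝒲 → ℝ} (hμt : Measurable μt) {Cμ : ℝ} (hμb : ∀ y, |μt y| ≤ Cμ)
    (heq : Q[f | MeasurableSpace.comap W inferInstance] =ᵐ[Q]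
      fun a => μt (W a) * (Q[q | MeasurableSpace.comap W inferInstance]) a)
    {M : 𝒲 → ℝ} (hM : Measurable M) {CM : ℝ} (hMb : ∀ y, |M y| ≤ CM) :
    ∫ a, M (W a) * f a ∂Q = ∫ a, M (W a) * μt (W a) * q a ∂Q := by
  have hm : MeasurableSpace.comap W inferInstance ≤ (inferInstance : MeasurableSpace α) :=
    measurable_iff_comap_le.mp hW
  have hWc : Measurable[MeasurableSpace.comap W inferInstance] W :=
    measurable_iff_comap_le.mpr le_rfl
  have hMW : StronglyMeasurable[MeasurableSpace.comap W inferInstance] (fun a => M (W a)) :=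
    (hM.comp hWc).stronglyMeasurable
  have hMμW : StronglyMeasurable[MeasurableSpace.comap W inferInstance]
      (fun a => M (W a) * μt (W a)) :=
    ((hM.comp hWc).mul (hμt.comp hWc)).stronglyMeasurable
  have hfint : Integrable f Q := integrable_of_bdd hfm.aestronglyMeasurable hfb
  have hqint : Integrable q Q := integrable_of_bdd hqm.aestronglyMeasurable hqb
  have hMfint : Integrable (fun a => M (W a) * f a) Q :=
    integrable_of_bdd (((hM.comp hW).mul hfm).aestronglyMeasurable)
      (fun a => abs_mul_le (hMb _) (hfb _))
  have hMμqint : Integrable (fun a => M (W a) * μt (W a) * q a) Q :=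
    integrable_of_bdd ((((hM.comp hW).mul (hμt.comp hW)).mul hqm).aestronglyMeasurable)
      (fun a => abs_mul_le (abs_mul_le (hMb _) (hμb _)) (hqb _))
  have hpull1 : Q[(fun a => M (W a) * f a) | MeasurableSpace.comap W inferInstance] =ᵐ[Q]
      fun a => M (W a) * (Q[f | MeasurableSpace.comap W inferInstance]) a :=
    condExp_mul_of_stronglyMeasurable_left hMW hMfint hfint
  have hpull2 : Q[(fun a => (M (W a) * μt (W a)) * q a) |
      MeasurableSpace.comap W inferInstance] =ᵐ[Q]
      fun a => (M (W a) * μt (W a)) * (Q[q | MeasurableSpace.comap W inferInstance]) a :=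
    condExp_mul_of_stronglyMeasurable_left hMμW hMμqint hqint
  calc ∫ a, M (W a) * f a ∂Q
      = ∫ a, (Q[(fun a => M (W a) * f a) | MeasurableSpace.comap W inferInstance]) a ∂Q :=
        (integral_condExp hm).symm
    _ = ∫ a, (Q[(fun a => (M (W a) * μt (W a)) * q a) |
          MeasurableSpace.comap W inferInstance]) a ∂Q := by
        refine integral_congr_ae ?_
        filter_upwards [hpull1, hpull2, heq] with a h1 h2 h3
        rw [h1, h2, h3]
        ring
    _ = ∫ a, M (W a) * μt (W a) * q a ∂Q := by
        rw [integral_condExp hm]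


lemma strat_meas {D0 D1 : Ω → ℝ} (hD0 : Measurable D0) (hD1 : Measurable D1) (s : ℝ × ℝ) :
    Measurable (strat D0 D1 s) :=
  Measurable.ite ((hD1.prodMk hD0) (measurableSet_singleton s)) measurable_const
    measurable_const

lemma strat_nonneg (D0 D1 : Ω → ℝ) (s : ℝ × ℝ) (ω : Ω) : 0 ≤ strat D0 D1 s ω := by
  unfold strat; split <;> norm_num

lemma strat_le_one (D0 D1 : Ω → ℝ) (s : ℝ × ℝ) (ω : Ω) : strat D0 D1 s ω ≤ 1 := by
  unfold strat; split <;> norm_num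

lemma strat_abs_le (D0 D1 : Ω → ℝ) (s : ℝ × ℝ) (ω : Ω) : |strat D0 D1 s ω| ≤ 1 := by
  rw [abs_le]
  exact ⟨by linarith [strat_nonneg D0 D1 s ω], strat_le_one D0 D1 s ω⟩

lemma abs_div_le {a d lo A : ℝ} (ha : |a| ≤ A) (hd : lo ≤ d) (hlo : 0 < lo) :
    |a / d| ≤ A / lo := by
  have hdpos : 0 < d := lt_of_lt_of_le hlo hd
  rw [abs_div, abs_of_pos hdpos]
  exact div_le_div₀ ((abs_nonneg a).trans ha) ha hlo hd

/-- Pairwise principal ignorability holds with the clamped version of `μbar` as well. -/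
lemma ppi_clamp (P : Measure Ω) [IsProbabilityMeasure P] {X : Ω → 𝒳} (hX : Measurable X)
    {D0 D1 Y0 Y1 : Ω → ℝ} (hD0 : Measurable D0) (hD1 : Measurable D1)
    (hY0 : Measurable Y0) (hY1 : Measurable Y1)
    {h : ℝ → ℝ → ℝ} (hh : Measurable fun p : ℝ × ℝ => h p.1 p.2)
    {C : ℝ} (hC0 : 0 ≤ C) (hC : ∀ u v, |h u v| ≤ C)
    {μbar : 𝒳 × 𝒳 → ℝ} (hPPI : PPI10 P X D0 D1 Y0 Y1 h μbar)
    (s₁ s₂ : ℝ × ℝ) (hs₁ : s₁ = (1, 0) ∨ s₁ = (1, 1)) (hs₂ : s₂ = (1, 0) ∨ s₂ = (0, 0)) :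
    (P.prod P)[(fun p => h (Y1 p.1) (Y0 p.2) * strat D0 D1 s₁ p.1 * strat D0 D1 s₂ p.2) |
        MeasurableSpace.comap (fun p : Ω × Ω => (X p.1, X p.2)) inferInstance]
      =ᵐ[P.prod P]
    fun p => max (-C) (min C (μbar (X p.1, X p.2))) *
      ((P.prod P)[(fun q => strat D0 D1 s₁ q.1 * strat D0 D1 s₂ q.2) |
        MeasurableSpace.comap (fun p : Ω × Ω => (X p.1, X p.2)) inferInstance]) p := by
  classical
  have hmle : MeasurableSpace.comap (fun p : Ω × Ω => (X p.1, X p.2)) inferInstance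
      ≤ (inferInstance : MeasurableSpace (Ω × Ω)) :=
    measurable_iff_comap_le.mp ((hX.comp measurable_fst).prodMk (hX.comp measurable_snd))
  set q : Ω × Ω → ℝ := fun p => strat D0 D1 s₁ p.1 * strat D0 D1 s₂ p.2 with hqdef
  set f : Ω × Ω → ℝ :=
    fun p => h (Y1 p.1) (Y0 p.2) * strat D0 D1 s₁ p.1 * strat D0 D1 s₂ p.2 with hfdef
  have hq_m : Measurable q :=
    ((strat_meas hD0 hD1 s₁).comp measurable_fst).mul
      ((strat_meas hD0 hD1 s₂).comp measurable_snd)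
  have hq_int : Integrable q (P.prod P) :=
    integrable_of_bdd hq_m.aestronglyMeasurable (C := 1) (fun p => by
      simpa [hqdef, abs_mul] using abs_mul_le (strat_abs_le D0 D1 s₁ p.1) (strat_abs_le D0 D1 s₂ p.2))
  have hf_m : Measurable f :=
    ((hh.comp ((hY1.comp measurable_fst).prodMk (hY0.comp measurable_snd))).mul
      ((strat_meas hD0 hD1 s₁).comp measurable_fst)).mul
      ((strat_meas hD0 hD1 s₂).comp measurable_snd)
  have hf_int : Integrable f (P.prod P) := by
    refine integrable_of_bdd hf_m.aestronglyMeasurable (C := C * 1 * 1) fun p => ?_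
    exact abs_mul_le (abs_mul_le (hC _ _) (strat_abs_le D0 D1 s₁ p.1))
      (strat_abs_le D0 D1 s₂ p.2)
  have hCq_int : Integrable (fun p => C * q p) (P.prod P) := hq_int.const_mul C
  have hQpos : 0 ≤ᵐ[P.prod P] (P.prod P)[q | MeasurableSpace.comap (fun p : Ω × Ω => (X p.1, X p.2)) inferInstance] :=
    condExp_nonneg (ae_of_all _ fun p =>
      mul_nonneg (strat_nonneg D0 D1 s₁ p.1) (strat_nonneg D0 D1 s₂ p.2))
  have hub : ∀ p : Ω × Ω, f p ≤ C * q p := by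
    intro p
    have h1 : h (Y1 p.1) (Y0 p.2) ≤ C := (abs_le.mp (hC _ _)).2
    have hst1 := strat_nonneg D0 D1 s₁ p.1
    have hst2 := strat_nonneg D0 D1 s₂ p.2
    have hkey := mul_nonneg (sub_nonneg.mpr h1) (mul_nonneg hst1 hst2)
    rw [hfdef, hqdef]
    dsimp only
    nlinarith [hkey]
  have hlb : ∀ p : Ω × Ω, -(C * q p) ≤ f p := by
    intro p
    have h1 : -C ≤ h (Y1 p.1) (Y0 p.2) := (abs_le.mp (hC _ _)).1
    have hst1 := strat_nonneg D0 D1 s₁ p.1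
    have hst2 := strat_nonneg D0 D1 s₂ p.2
    have hkey := mul_nonneg (sub_nonneg.mpr (neg_le.mp (neg_le.mpr h1)))
      (mul_nonneg hst1 hst2)
    rw [hfdef, hqdef]
    dsimp only
    nlinarith [hkey]
  have hcm1 : (P.prod P)[f | MeasurableSpace.comap (fun p : Ω × Ω => (X p.1, X p.2)) inferInstance] ≤ᵐ[P.prod P] (P.prod P)[(fun p => C * q p) | MeasurableSpace.comap (fun p : Ω × Ω => (X p.1, X p.2)) inferInstance] :=
    condExp_mono hf_int hCq_int (ae_of_all _ hub)
  have hcm2 : (P.prod P)[(fun p => -(C * q p)) | MeasurableSpace.comap (fun p : Ω × Ω => (X p.1, X p.2)) inferInstance] ≤ᵐ[P.prod P] (P.prod P)[f | MeasurableSpace.comap (fun p : Ω × Ω => (X p.1, X p.2)) inferInstance] :=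
    condExp_mono hCq_int.neg hf_int (ae_of_all _ hlb)
  have hsm : (P.prod P)[(fun p => C * q p) | MeasurableSpace.comap (fun p : Ω × Ω => (X p.1, X p.2)) inferInstance] =ᵐ[P.prod P]
      fun p => C * ((P.prod P)[q | MeasurableSpace.comap (fun p : Ω × Ω => (X p.1, X p.2)) inferInstance]) p := by
    have h1 : (P.prod P)[C • q | MeasurableSpace.comap (fun p : Ω × Ω => (X p.1, X p.2)) inferInstance] =ᵐ[P.prod P] C • (P.prod P)[q | MeasurableSpace.comap (fun p : Ω × Ω => (X p.1, X p.2)) inferInstance] :=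
      condExp_smul C q _
    have h2 : (P.prod P)[(fun p => C * q p) | MeasurableSpace.comap (fun p : Ω × Ω => (X p.1, X p.2)) inferInstance] = (P.prod P)[C • q | MeasurableSpace.comap (fun p : Ω × Ω => (X p.1, X p.2)) inferInstance] := rfl
    rw [h2]
    filter_upwards [h1] with p hp
    simpa [smul_eq_mul] using hp
  have hneg : (P.prod P)[(fun p => -(C * q p)) | MeasurableSpace.comap (fun p : Ω × Ω => (X p.1, X p.2)) inferInstance] =ᵐ[P.prod P]
      fun p => -((P.prod P)[(fun p => C * q p) | MeasurableSpace.comap (fun p : Ω × Ω => (X p.1, X p.2)) inferInstance]) p := by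
    have h1 : (P.prod P)[-(fun p => C * q p) | MeasurableSpace.comap (fun p : Ω × Ω => (X p.1, X p.2)) inferInstance] =ᵐ[P.prod P]
        -(P.prod P)[(fun p => C * q p) | MeasurableSpace.comap (fun p : Ω × Ω => (X p.1, X p.2)) inferInstance] := condExp_neg (fun p => C * q p) _
    have h2 : (P.prod P)[(fun p => -(C * q p)) | MeasurableSpace.comap (fun p : Ω × Ω => (X p.1, X p.2)) inferInstance]
        = (P.prod P)[-(fun p => C * q p) | MeasurableSpace.comap (fun p : Ω × Ω => (X p.1, X p.2)) inferInstance] := rfl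
    rw [h2]
    filter_upwards [h1] with p hp
    simpa using hp
  filter_upwards [hPPI.2 s₁ s₂ hs₁ hs₂, hQpos, hcm1, hcm2, hsm, hneg]
    with p he hQ h1 h2 h3 h4
  have hQ' : (0:ℝ) ≤ ((P.prod P)[q | MeasurableSpace.comap (fun p : Ω × Ω => (X p.1, X p.2)) inferInstance]) p := hQ
  rcases eq_or_lt_of_le hQ' with hQ0 | hQpos'
  · rw [he, ← hQ0, mul_zero, mul_zero]
  · have hub' : ((P.prod P)[f | MeasurableSpace.comap (fun p : Ω × Ω => (X p.1, X p.2)) inferInstance]) p ≤ C * ((P.prod P)[q | MeasurableSpace.comap (fun p : Ω × Ω => (X p.1, X p.2)) inferInstance]) p := by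
      calc ((P.prod P)[f | MeasurableSpace.comap (fun p : Ω × Ω => (X p.1, X p.2)) inferInstance]) p ≤ ((P.prod P)[(fun p => C * q p) | MeasurableSpace.comap (fun p : Ω × Ω => (X p.1, X p.2)) inferInstance]) p := h1
        _ = C * ((P.prod P)[q | MeasurableSpace.comap (fun p : Ω × Ω => (X p.1, X p.2)) inferInstance]) p := h3
    have hlb' : -(C * ((P.prod P)[q | MeasurableSpace.comap (fun p : Ω × Ω => (X p.1, X p.2)) inferInstance]) p) ≤ ((P.prod P)[f | MeasurableSpace.comap (fun p : Ω × Ω => (X p.1, X p.2)) inferInstance]) p := by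
      calc -(C * ((P.prod P)[q | MeasurableSpace.comap (fun p : Ω × Ω => (X p.1, X p.2)) inferInstance]) p) = -(((P.prod P)[(fun p => C * q p) | MeasurableSpace.comap (fun p : Ω × Ω => (X p.1, X p.2)) inferInstance]) p) := by
            rw [h3]
        _ = ((P.prod P)[(fun p => -(C * q p)) | MeasurableSpace.comap (fun p : Ω × Ω => (X p.1, X p.2)) inferInstance]) p := h4.symm
        _ ≤ ((P.prod P)[f | MeasurableSpace.comap (fun p : Ω × Ω => (X p.1, X p.2)) inferInstance]) p := h2
    rw [he] at hub' hlb' ⊢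
    have hbar_ub : μbar (X p.1, X p.2) ≤ C := by
      have := (mul_le_mul_iff_of_pos_right hQpos').mp hub'
      exact this
    have hbar_lb : -C ≤ μbar (X p.1, X p.2) := by
      have h5 : (-C) * ((P.prod P)[q | MeasurableSpace.comap (fun p : Ω × Ω => (X p.1, X p.2)) inferInstance]) p ≤ μbar (X p.1, X p.2) * ((P.prod P)[q | MeasurableSpace.comap (fun p : Ω × Ω => (X p.1, X p.2)) inferInstance]) p := by
        rw [neg_mul] at *
        linarith [hlb']
      exact (mul_le_mul_iff_of_pos_right hQpos').mp h5
    rw [min_eq_right hbar_ub, max_eq_right hbar_lb]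


lemma ae_prod_of_ae {α : Type*} [MeasurableSpace α] {μ : Measure α} [SFinite μ]
    {F : α → Prop} (h : ∀ᵐ x ∂μ, F x) :
    ∀ᵐ p ∂μ.prod μ, F p.1 ∧ F p.2 := by
  rw [ae_iff] at h ⊢
  set s := {x | ¬ F x} with hs
  have hsub : {p : α × α | ¬(F p.1 ∧ F p.2)} ⊆
      (toMeasurable μ s) ×ˢ univ ∪ univ ×ˢ (toMeasurable μ s) := by
    intro p hp
    simp only [mem_setOf_eq, not_and_or] at hp
    rcases hp with hp | hp
    · exact Or.inl ⟨subset_toMeasurable μ s hp, trivial⟩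
    · exact Or.inr ⟨trivial, subset_toMeasurable μ s hp⟩
  refine measure_mono_null hsub ?_
  have h0 : μ (toMeasurable μ s) = 0 := by rwa [measure_toMeasurable]
  refine le_antisymm (le_trans (measure_union_le _ _) ?_) zero_le
  simp [Measure.prod_prod, h0]

lemma unit_fact (P : Measure Ω) [IsProbabilityMeasure P] (X : Ω → 𝒳) (hX : Measurable X)
    {φ : Ω → ℝ} (hφm : Measurable φ) {Cφ : ℝ} (hφb : ∀ ω, |φ ω| ≤ Cφ)
    {w : 𝒳 → ℝ} (hw : Measurable w) {Cw : ℝ} (hwb : ∀ x, |w x| ≤ Cw)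
    (hver : (fun ω => w (X ω)) =ᵐ[P] P[φ | MeasurableSpace.comap X inferInstance])
    {g : 𝒳 → ℝ} (hg : Measurable g) {Cg : ℝ} (hgb : ∀ x, |g x| ≤ Cg) :
    ∫ ω, φ ω * g (X ω) ∂P = ∫ ω, w (X ω) * g (X ω) ∂P := by
  have hm : MeasurableSpace.comap X inferInstance ≤ (inferInstance : MeasurableSpace Ω) :=
    measurable_iff_comap_le.mp hX
  have hXc : Measurable[MeasurableSpace.comap X inferInstance] X :=
    measurable_iff_comap_le.mpr le_rfl
  have hgX : StronglyMeasurable[MeasurableSpace.comap X inferInstance] (fun ω => g (X ω)) :=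
    (hg.comp hXc).stronglyMeasurable
  have hφint : Integrable φ P := integrable_of_bdd hφm.aestronglyMeasurable hφb
  have hprod : Integrable (fun ω => g (X ω) * φ ω) P := by
    refine integrable_of_bdd ((hg.comp hX).mul hφm).aestronglyMeasurable (C := Cg * Cφ) ?_
    intro ω
    exact abs_mul_le (hgb _) (hφb _)
  calc ∫ ω, φ ω * g (X ω) ∂P = ∫ ω, (fun ω => g (X ω) * φ ω) ω ∂P := by
        simp only [mul_comm]
    _ = ∫ ω, (P[(fun ω => g (X ω) * φ ω) | MeasurableSpace.comap X inferInstance]) ω ∂P :=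
        (integral_condExp hm).symm
    _ = ∫ ω, g (X ω) * (P[φ | MeasurableSpace.comap X inferInstance]) ω ∂P := by
        refine integral_congr_ae ?_
        filter_upwards [condExp_mul_of_stronglyMeasurable_left hgX hprod hφint] with ω hω
        exact hω
    _ = ∫ ω, w (X ω) * g (X ω) ∂P := by
        refine integral_congr_ae ?_
        filter_upwards [hver] with ω hω
        rw [← hω, mul_comm]

lemma strat_expand_h {D0 D1 : Ω → ℝ} (hD0 : ∀ ω, D0 ω = 0 ∨ D0 ω = 1)
    (hD1 : ∀ ω, D1 ω = 0 ∨ D1 ω = 1) (p : Ω × Ω) (m H : ℝ) :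
    m * ((if D1 p.1 = 1 then (1:ℝ) else 0) * (if D0 p.2 = 0 then (1:ℝ) else 0) * H)
      = m * (H * strat D0 D1 (1, 0) p.1 * strat D0 D1 (1, 0) p.2)
        + m * (H * strat D0 D1 (1, 0) p.1 * strat D0 D1 (0, 0) p.2)
        + m * (H * strat D0 D1 (1, 1) p.1 * strat D0 D1 (1, 0) p.2)
        + m * (H * strat D0 D1 (1, 1) p.1 * strat D0 D1 (0, 0) p.2) := by
  unfold strat
  rcases hD1 p.1 with h1 | h1 <;> rcases hD0 p.1 with h2 | h2 <;>
    rcases hD1 p.2 with h3 | h3 <;> rcases hD0 p.2 with h4 | h4 <;>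
    rw [h1, h2, h3, h4] <;> norm_num [Prod.ext_iff]

lemma strat_expand_q {D0 D1 : Ω → ℝ} (hD0 : ∀ ω, D0 ω = 0 ∨ D0 ω = 1)
    (hD1 : ∀ ω, D1 ω = 0 ∨ D1 ω = 1) (p : Ω × Ω) (m : ℝ) :
    m * ((if D1 p.1 = 1 then (1:ℝ) else 0) * (if D0 p.2 = 0 then (1:ℝ) else 0))
      = m * (strat D0 D1 (1, 0) p.1 * strat D0 D1 (1, 0) p.2)
        + m * (strat D0 D1 (1, 0) p.1 * strat D0 D1 (0, 0) p.2)
        + m * (strat D0 D1 (1, 1) p.1 * strat D0 D1 (1, 0) p.2)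
        + m * (strat D0 D1 (1, 1) p.1 * strat D0 D1 (0, 0) p.2) := by
  unfold strat
  rcases hD1 p.1 with h1 | h1 <;> rcases hD0 p.1 with h2 | h2 <;>
    rcases hD1 p.2 with h3 | h3 <;> rcases hD0 p.2 with h4 | h4 <;>
    rw [h1, h2, h3, h4] <;> norm_num [Prod.ext_iff]

lemma integral_sum4 {α : Type*} [MeasurableSpace α] (μ : Measure α)
    (f1 f2 f3 f4 : α → ℝ) (h1 : Integrable f1 μ) (h2 : Integrable f2 μ)
    (h3 : Integrable f3 μ) (h4 : Integrable f4 μ) :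
    ∫ p, (f1 p + f2 p + f3 p + f4 p) ∂μ
      = ∫ p, f1 p ∂μ + ∫ p, f2 p ∂μ + ∫ p, f3 p ∂μ + ∫ p, f4 p ∂μ := by
  have h12 : Integrable (fun p => f1 p + f2 p) μ := h1.add h2
  have h123 : Integrable (fun p => f1 p + f2 p + f3 p) μ := h12.add h3
  rw [integral_add h123 h4, integral_add h12 h3, integral_add h1 h2]

end Helpers

set_option maxHeartbeats 1000000 in
/-- **Propensity-score-and-principal-score weighting identification of `τ_{h,N}^{10}`.**
Under treatment ignorability, monotonicity, overlap, and pairwise principal ignorability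
for stratum 10,
`E[ w⁺(O₁)·w⁻(O₂)·h(Y₁, Y₂) ] = τ_{h,N}^{10}`. -/
theorem weighting_identification_10 [StandardBorelSpace 𝒳]
    (P : Measure Ω) [IsProbabilityMeasure P]
    (X : Ω → 𝒳) (Z D0 D1 Y0 Y1 : Ω → ℝ)
    (hX : Measurable X) (hZ : Measurable Z) (hD0 : Measurable D0) (hD1 : Measurable D1)
    (hY0 : Measurable Y0) (hY1 : Measurable Y1)
    (hZ01 : ∀ ω, Z ω = 0 ∨ Z ω = 1)
    (hD0_01 : ∀ ω, D0 ω = 0 ∨ D0 ω = 1) (hD1_01 : ∀ ω, D1 ω = 0 ∨ D1 ω = 1)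
    -- π, p₀, p₁ are σ(X)-measurable versions of P(Z=1|σ(X)), P(D(0)=1|σ(X)), P(D(1)=1|σ(X))
    (πf p0f p1f : 𝒳 → ℝ)
    (hπ : IsCondProb P X {ω | Z ω = 1} πf)
    (hp0 : IsCondProb P X {ω | D0 ω = 1} p0f) (hp1 : IsCondProb P X {ω | D1 ω = 1} p1f)
    -- treatment ignorability: Z ⫫ (D(0), D(1), Y(0), Y(1)) | σ(X)
    (hign : CondIndepGiven P X Z (fun ω => (D0 ω, D1 ω, Y0 ω, Y1 ω)))
    -- monotonicity
    (hmono : ∀ᵐ ω ∂P, D0 ω ≤ D1 ω)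
    -- overlap
    (ε : ℝ) (hε : 0 < ε) (hε' : ε < 1 / 2)
    (hover : ∀ᵐ ω ∂P, (ε < πf (X ω) ∧ πf (X ω) < 1 - ε) ∧
      ε < p1f (X ω) ∧ ε < 1 - p0f (X ω))
    -- bounded measurable contrast function
    (h : ℝ → ℝ → ℝ) (hh : Measurable fun p : ℝ × ℝ => h p.1 p.2)
    (hhbd : ∃ C, ∀ u v, |h u v| ≤ C)
    -- pairwise principal ignorability for stratum 10
    (μbar : 𝒳 × 𝒳 → ℝ) (hPPI : PPI10 P X D0 D1 Y0 Y1 h μbar) :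
    ∫ p, wplus πf p0f p1f X Z (Dobs Z D0 D1) p.1 *
          wminus πf p0f p1f X Z (Dobs Z D0 D1) p.2 *
          h (Yobs Z Y0 Y1 p.1) (Yobs Z Y0 Y1 p.2) ∂(P.prod P)
      = tauN10 P D0 D1 Y0 Y1 h := by
  classical
  obtain ⟨C₀, hC₀⟩ := hhbd
  set C : ℝ := max C₀ 0 with hCdef
  have hC : ∀ u v, |h u v| ≤ C := fun u v => (hC₀ u v).trans (le_max_left _ _)
  have hC0 : (0:ℝ) ≤ C := le_max_right _ _
  have hmX : MeasurableSpace.comap X inferInstance ≤ (inferInstance : MeasurableSpace Ω) :=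
    measurable_iff_comap_le.mp hX
  -- clamped nuisance functions
  set πt : 𝒳 → ℝ := fun x => max ε (min (1 - ε) (πf x)) with hπtdef
  set p0t : 𝒳 → ℝ := fun x => max 0 (min (1 - ε) (p0f x)) with hp0tdef
  set p1t : 𝒳 → ℝ := fun x => max ε (min 1 (p1f x)) with hp1tdef
  set μt : 𝒳 × 𝒳 → ℝ := fun y => max (-C) (min C (μbar y)) with hμtdef
  have hπtm : Measurable πt := measurable_const.max (measurable_const.min hπ.1)
  have hp0tm : Measurable p0t := measurable_const.max (measurable_const.min hp0.1)
  have hp1tm : Measurable p1t := measurable_const.max (measurable_const.min hp1.1)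
  have hμtm : Measurable μt := measurable_const.max (measurable_const.min hPPI.1)
  have hπt_lb : ∀ x, ε ≤ πt x := fun x => le_max_left _ _
  have hπt_ub : ∀ x, πt x ≤ 1 - ε := fun x => max_le (by linarith) (min_le_left _ _)
  have hp0t_lb : ∀ x, 0 ≤ p0t x := fun x => le_max_left _ _
  have hp0t_ub : ∀ x, p0t x ≤ 1 - ε := fun x => max_le (by linarith) (min_le_left _ _)
  have hp1t_lb : ∀ x, ε ≤ p1t x := fun x => le_max_left _ _
  have hp1t_ub : ∀ x, p1t x ≤ 1 := fun x => max_le (by linarith) (min_le_left _ _)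
  have hμt_b : ∀ y, |μt y| ≤ C := fun y =>
    abs_le.mpr ⟨le_max_left _ _, max_le (by linarith) (min_le_left _ _)⟩
  have hπt_pos : ∀ x, (0:ℝ) < πt x := fun x => lt_of_lt_of_le hε (hπt_lb x)
  have h1πt_pos : ∀ x, (0:ℝ) < 1 - πt x := fun x => by have := hπt_ub x; linarith
  have hp1t_pos : ∀ x, (0:ℝ) < p1t x := fun x => lt_of_lt_of_le hε (hp1t_lb x)
  have h1p0t_pos : ∀ x, (0:ℝ) < 1 - p0t x := fun x => by have := hp0t_ub x; linarith
  -- boundedness facts for the raw conditional probabilities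
  have h0p0 : ∀ᵐ ω ∂P, 0 ≤ p0f (X ω) := by
    have hnn : 0 ≤ᵐ[P] P[({ω | D0 ω = 1} : Set Ω).indicator (fun _ => (1:ℝ)) |
        MeasurableSpace.comap X inferInstance] :=
      condExp_nonneg (ae_of_all _ fun ω => by
        rw [Set.indicator_apply]; split <;> norm_num)
    filter_upwards [hp0.2, hnn] with ω h1 h2
    rw [h1]; exact h2
  have hintD1 : Integrable (({ω | D1 ω = 1} : Set Ω).indicator fun _ => (1:ℝ)) P :=
    integrable_of_bdd (measurable_const.indicator
      (hD1 (measurableSet_singleton 1) : MeasurableSet {ω | D1 ω = 1})).aestronglyMeasurable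
      (C := 1) (fun ω => ind_abs_le_one _ _)
  have hintD0 : Integrable (({ω | D0 ω = 1} : Set Ω).indicator fun _ => (1:ℝ)) P :=
    integrable_of_bdd (measurable_const.indicator
      (hD0 (measurableSet_singleton 1) : MeasurableSet {ω | D0 ω = 1})).aestronglyMeasurable
      (C := 1) (fun ω => ind_abs_le_one _ _)
  have hp1le : ∀ᵐ ω ∂P, p1f (X ω) ≤ 1 := by
    have hmono1 : ({ω | D1 ω = 1} : Set Ω).indicator (fun _ => (1:ℝ)) ≤ᵐ[P] fun _ => (1:ℝ) :=
      ae_of_all _ fun ω => by rw [Set.indicator_apply]; split <;> norm_num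
    have hcm := condExp_mono (m := MeasurableSpace.comap X inferInstance) hintD1
      (integrable_const 1) hmono1
    have hcc := condExp_const (μ := P) hmX (1:ℝ)
    filter_upwards [hp1.2, hcm] with ω h1 h2
    rw [h1]
    calc _ ≤ (P[(fun _ => (1:ℝ)) | MeasurableSpace.comap X inferInstance]) ω := h2
      _ = 1 := by rw [hcc]
  have hgood : ∀ᵐ ω ∂P,
      πt (X ω) = πf (X ω) ∧ p0t (X ω) = p0f (X ω) ∧ p1t (X ω) = p1f (X ω) := by
    filter_upwards [hover, h0p0, hp1le] with ω hov h0 h1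
    obtain ⟨⟨ha, hb⟩, hc, hd⟩ := hov
    refine ⟨?_, ?_, ?_⟩
    · show max ε (min (1 - ε) (πf (X ω))) = πf (X ω)
      rw [min_eq_right hb.le, max_eq_right ha.le]
    · show max 0 (min (1 - ε) (p0f (X ω))) = p0f (X ω)
      rw [min_eq_right (by linarith), max_eq_right h0]
    · show max ε (min 1 (p1f (X ω))) = p1f (X ω)
      rw [min_eq_right h1, max_eq_right hc.le]
  -- conditional-expectation versions for clamped functions
  have hverZ1 : (fun ω => πt (X ω)) =ᵐ[P]
      P[(fun ω => ({(1:ℝ)} : Set ℝ).indicator (fun _ => (1:ℝ)) (Z ω)) |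
        MeasurableSpace.comap X inferInstance] := by
    have hfun : (fun ω => ({(1:ℝ)} : Set ℝ).indicator (fun _ => (1:ℝ)) (Z ω))
        = ({ω | Z ω = 1} : Set Ω).indicator (fun _ => (1:ℝ)) := by
      funext ω
      rw [Set.indicator_apply, Set.indicator_apply]
      simp [Set.mem_setOf_eq]
    rw [hfun]
    filter_upwards [hπ.2, hgood] with ω h1 h2
    exact h2.1.trans h1
  have hintZ1 : Integrable (fun ω => ({(1:ℝ)} : Set ℝ).indicator (fun _ => (1:ℝ)) (Z ω)) P :=
    integrable_of_bdd ((measurable_const.indicator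
      (measurableSet_singleton (1:ℝ))).comp hZ).aestronglyMeasurable
      (C := 1) (fun ω => ind_abs_le_one _ _)
  have hverZ0 : (fun ω => 1 - πt (X ω)) =ᵐ[P]
      P[(fun ω => ({(0:ℝ)} : Set ℝ).indicator (fun _ => (1:ℝ)) (Z ω)) |
        MeasurableSpace.comap X inferInstance] := by
    have hfun : (fun ω => ({(0:ℝ)} : Set ℝ).indicator (fun _ => (1:ℝ)) (Z ω))
        = (fun _ => (1:ℝ)) - (fun ω => ({(1:ℝ)} : Set ℝ).indicator (fun _ => (1:ℝ)) (Z ω)) := by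
      funext ω
      rcases hZ01 ω with hz | hz <;>
        simp [hz, Set.indicator_apply, Pi.sub_apply]
    rw [hfun]
    have hsub := condExp_sub (μ := P) (m := MeasurableSpace.comap X inferInstance)
      (integrable_const (1:ℝ)) hintZ1
    have hcc := condExp_const (μ := P) hmX (1:ℝ)
    filter_upwards [hsub, hverZ1] with ω h1 h2
    rw [h1, Pi.sub_apply, hcc, ← h2]
  have hverD1 : (fun ω => p1t (X ω)) =ᵐ[P]
      P[(fun ω => if D1 ω = 1 then (1:ℝ) else 0) | MeasurableSpace.comap X inferInstance] := by
    have hfun : (fun ω => if D1 ω = 1 then (1:ℝ) else 0)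
        = ({ω | D1 ω = 1} : Set Ω).indicator (fun _ => (1:ℝ)) := by
      funext ω
      rw [Set.indicator_apply]
      simp [Set.mem_setOf_eq]
    rw [hfun]
    filter_upwards [hp1.2, hgood] with ω h1 h2
    exact h2.2.2.trans h1
  have hverD0c : (fun ω => 1 - p0t (X ω)) =ᵐ[P]
      P[(fun ω => if D0 ω = 0 then (1:ℝ) else 0) | MeasurableSpace.comap X inferInstance] := by
    have hfun : (fun ω => if D0 ω = 0 then (1:ℝ) else 0)
        = (fun _ => (1:ℝ)) - ({ω | D0 ω = 1} : Set Ω).indicator (fun _ => (1:ℝ)) := by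
      funext ω
      rcases hD0_01 ω with hd | hd <;>
        simp [hd, Set.indicator_apply, Pi.sub_apply, Set.mem_setOf_eq]
    rw [hfun]
    have hsub := condExp_sub (μ := P) (m := MeasurableSpace.comap X inferInstance)
      (integrable_const (1:ℝ)) hintD0
    have hcc := condExp_const (μ := P) hmX (1:ℝ)
    filter_upwards [hsub, hp0.2, hgood] with ω h1 h2 h3
    rw [h1, Pi.sub_apply, hcc, ← h2, ← h3.2.1]
  have hverDe : (fun ω => p1t (X ω) - p0t (X ω)) =ᵐ[P]
      P[(fun ω => D1 ω - D0 ω) | MeasurableSpace.comap X inferInstance] := by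
    have hfun : (fun ω => D1 ω - D0 ω)
        = ({ω | D1 ω = 1} : Set Ω).indicator (fun _ => (1:ℝ))
          - ({ω | D0 ω = 1} : Set Ω).indicator (fun _ => (1:ℝ)) := by
      funext ω
      rcases hD1_01 ω with h1 | h1 <;> rcases hD0_01 ω with h2 | h2 <;>
        simp [h1, h2, Set.indicator_apply, Pi.sub_apply, Set.mem_setOf_eq]
    rw [hfun]
    have hsub := condExp_sub (μ := P) (m := MeasurableSpace.comap X inferInstance)
      hintD1 hintD0
    filter_upwards [hsub, hp1.2, hp0.2, hgood] with ω h1 h2 h3 h4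
    rw [h1, Pi.sub_apply, ← h2, ← h3, ← h4.2.2, ← h4.2.1]
  -- the latent state map
  set V : Ω → ℝ × ℝ × ℝ × ℝ := fun ω => (D0 ω, D1 ω, Y0 ω, Y1 ω) with hVdef
  have hV : Measurable V := hD0.prodMk (hD1.prodMk (hY0.prodMk hY1))
  have hπt0 : ∀ x, (0:ℝ) ≤ πt x := fun x => hε.le.trans (hπt_lb x)
  have hπt1 : ∀ x, πt x ≤ 1 := fun x => (hπt_ub x).trans (by linarith)
  have h1πt0 : ∀ x, (0:ℝ) ≤ 1 - πt x := fun x => by have := hπt_ub x; linarith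
  have h1πt1 : ∀ x, 1 - πt x ≤ 1 := fun x => by have := hπt_lb x; linarith
  -- unit-level replacement facts
  have factZ1 : ∀ g : (ℝ × ℝ × ℝ × ℝ) × 𝒳 → ℝ, Measurable g → ∀ Cg : ℝ, (∀ y, |g y| ≤ Cg) →
      ∫ ω, ({(1:ℝ)} : Set ℝ).indicator (fun _ => (1:ℝ)) (Z ω) * g (V ω, X ω) ∂P
        = ∫ ω, πt (X ω) * g (V ω, X ω) ∂P :=
    fun g hg Cg hgb => zfact P X hX V hV Z hZ {(1:ℝ)} (measurableSet_singleton 1)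
      hπtm hπt0 hπt1 hverZ1 (fun t ht => hign {(1:ℝ)} t (measurableSet_singleton 1) ht) hg hgb
  have factZ0 : ∀ g : (ℝ × ℝ × ℝ × ℝ) × 𝒳 → ℝ, Measurable g → ∀ Cg : ℝ, (∀ y, |g y| ≤ Cg) →
      ∫ ω, ({(0:ℝ)} : Set ℝ).indicator (fun _ => (1:ℝ)) (Z ω) * g (V ω, X ω) ∂P
        = ∫ ω, (1 - πt (X ω)) * g (V ω, X ω) ∂P :=
    fun g hg Cg hgb => zfact P X hX V hV Z hZ {(0:ℝ)} (measurableSet_singleton 0)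
      (measurable_const.sub hπtm) h1πt0 h1πt1 hverZ0
      (fun t ht => hign {(0:ℝ)} t (measurableSet_singleton 0) ht) hg hgb
  have mInd1 : Measurable (fun ω => if D1 ω = 1 then (1:ℝ) else 0) :=
    Measurable.ite (hD1 (measurableSet_singleton 1)) measurable_const measurable_const
  have mInd0 : Measurable (fun ω => if D0 ω = 0 then (1:ℝ) else 0) :=
    Measurable.ite (hD0 (measurableSet_singleton 0)) measurable_const measurable_const
  have bInd1 : ∀ ω, |if D1 ω = 1 then (1:ℝ) else 0| ≤ 1 := fun ω => by split <;> norm_num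
  have bInd0 : ∀ ω, |if D0 ω = 0 then (1:ℝ) else 0| ≤ 1 := fun ω => by split <;> norm_num
  have bp1t : ∀ x, |p1t x| ≤ 1 := fun x =>
    abs_le.mpr ⟨by linarith [hp1t_lb x], hp1t_ub x⟩
  have b1p0t : ∀ x, |1 - p0t x| ≤ 1 := fun x =>
    abs_le.mpr ⟨by linarith [hp0t_ub x, hε], by linarith [hp0t_lb x]⟩
  have mDe : Measurable (fun ω => D1 ω - D0 ω) := hD1.sub hD0
  have bDe : ∀ ω, |D1 ω - D0 ω| ≤ 1 := fun ω => by
    rcases hD1_01 ω with h1 | h1 <;> rcases hD0_01 ω with h2 | h2 <;>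
      rw [h1, h2] <;> norm_num
  have met : Measurable (fun x => p1t x - p0t x) := hp1tm.sub hp0tm
  have habs2 : ∀ x, |p1t x - p0t x| ≤ 2 := fun x =>
    abs_le.mpr ⟨by linarith [hp1t_lb x, hp0t_ub x, hε], by linarith [hp1t_ub x, hp0t_lb x]⟩
  have bet : ∀ x, |p1t x - p0t x| ≤ 2 := habs2
  have factD1 : ∀ g : 𝒳 → ℝ, Measurable g → ∀ Cg : ℝ, (∀ y, |g y| ≤ Cg) →
      ∫ ω, (if D1 ω = 1 then (1:ℝ) else 0) * g (X ω) ∂P = ∫ ω, p1t (X ω) * g (X ω) ∂P :=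
    fun g hg Cg hgb => unit_fact P X hX mInd1 bInd1 hp1tm bp1t hverD1 hg hgb
  have factD0c : ∀ g : 𝒳 → ℝ, Measurable g → ∀ Cg : ℝ, (∀ y, |g y| ≤ Cg) →
      ∫ ω, (if D0 ω = 0 then (1:ℝ) else 0) * g (X ω) ∂P = ∫ ω, (1 - p0t (X ω)) * g (X ω) ∂P :=
    fun g hg Cg hgb => unit_fact P X hX mInd0 bInd0 (measurable_const.sub hp0tm) b1p0t
      hverD0c hg hgb
  have factDe : ∀ g : 𝒳 → ℝ, Measurable g → ∀ Cg : ℝ, (∀ y, |g y| ≤ Cg) →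
      ∫ ω, (D1 ω - D0 ω) * g (X ω) ∂P = ∫ ω, (p1t (X ω) - p0t (X ω)) * g (X ω) ∂P :=
    fun g hg Cg hgb => unit_fact P X hX mDe bDe met bet hverDe hg hgb
  -- component functions for the weighting integrand
  set c1 : 𝒳 → ℝ := fun x => (p1t x - p0t x) / (πt x * p1t x) with hc1def
  set c2 : 𝒳 → ℝ := fun x => (p1t x - p0t x) / ((1 - πt x) * (1 - p0t x)) with hc2def
  have hc1m : Measurable c1 := met.div (hπtm.mul hp1tm)
  have hc2m : Measurable c2 := met.div ((measurable_const.sub hπtm).mul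
    (measurable_const.sub hp0tm))
  have hεε : (0:ℝ) < ε * ε := mul_pos hε hε
  have hc1b : ∀ x, |c1 x| ≤ 2 / (ε * ε) := fun x =>
    abs_div_le (habs2 x) (by nlinarith [hπt_lb x, hp1t_lb x, hε]) hεε
  have hc2b : ∀ x, |c2 x| ≤ 2 / (ε * ε) := fun x =>
    abs_div_le (habs2 x) (by nlinarith [hπt_ub x, hp0t_ub x, hε]) hεε
  set G0 : ((ℝ × ℝ × ℝ × ℝ) × 𝒳) × (ℝ × ℝ × ℝ × ℝ) × 𝒳 → ℝ := fun q =>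
    c1 q.1.2 * c2 q.2.2 * (if q.1.1.2.1 = (1:ℝ) then (1:ℝ) else 0) *
      (if q.2.1.1 = (0:ℝ) then (1:ℝ) else 0) * h q.1.1.2.2.2 q.2.1.2.2.1 with hG0def
  have hG0m : Measurable G0 :=
    ((((hc1m.comp measurable_fst.snd).mul (hc2m.comp measurable_snd.snd)).mul
      (Measurable.ite (measurable_fst.fst.snd.fst (measurableSet_singleton (1:ℝ)))
        measurable_const measurable_const)).mul
      (Measurable.ite (measurable_snd.fst.fst (measurableSet_singleton (0:ℝ)))
        measurable_const measurable_const)).mul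
      (hh.comp ((measurable_fst.fst.snd.snd.snd).prodMk (measurable_snd.fst.snd.snd.fst)))
  have hG0b : ∀ q, |G0 q| ≤ 2 / (ε * ε) * (2 / (ε * ε)) * 1 * 1 * C := fun q =>
    abs_mul_le (abs_mul_le (abs_mul_le (abs_mul_le (hc1b _) (hc2b _))
      (by split <;> norm_num)) (by split <;> norm_num)) (hC _ _)
  set M0 : 𝒳 × 𝒳 → ℝ := fun y =>
    (p1t y.1 - p0t y.1) / p1t y.1 * ((p1t y.2 - p0t y.2) / (1 - p0t y.2)) with hM0def
  have hM0m : Measurable M0 :=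
    ((met.div hp1tm).comp measurable_fst).mul
      ((met.div (measurable_const.sub hp0tm)).comp measurable_snd)
  have hM0b : ∀ y, |M0 y| ≤ 2 / ε * (2 / ε) := fun y =>
    abs_mul_le (abs_div_le (habs2 _) (hp1t_lb _) hε)
      (abs_div_le (habs2 _) (by linarith [hp0t_ub y.2]) hε)
  set T : Ω → (ℝ × ℝ × ℝ × ℝ) × 𝒳 := fun ω => (V ω, X ω) with hTdef
  have hT : Measurable T := hV.prodMk hX
  set zi : Ω → ℝ := fun ω => ({(1:ℝ)} : Set ℝ).indicator (fun _ => (1:ℝ)) (Z ω) with hzidef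
  set zo : Ω → ℝ := fun ω => ({(0:ℝ)} : Set ℝ).indicator (fun _ => (1:ℝ)) (Z ω) with hzodef
  have mzi : Measurable zi :=
    (measurable_const.indicator (measurableSet_singleton (1:ℝ))).comp hZ
  have mzo : Measurable zo :=
    (measurable_const.indicator (measurableSet_singleton (0:ℝ))).comp hZ
  have bzi : ∀ ω, |zi ω| ≤ 1 := fun ω => ind_abs_le_one _ _
  have bzo : ∀ ω, |zo ω| ≤ 1 := fun ω => ind_abs_le_one _ _
  set ind1 : Ω → ℝ := fun ω => if D1 ω = 1 then (1:ℝ) else 0 with hind1def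
  set ind0 : Ω → ℝ := fun ω => if D0 ω = 0 then (1:ℝ) else 0 with hind0def
  -- Step 1: rewrite the observed-data integrand in latent form
  have hgood2 := ae_prod_of_ae hgood
  have L1 : ∫ p, wplus πf p0f p1f X Z (Dobs Z D0 D1) p.1 *
        wminus πf p0f p1f X Z (Dobs Z D0 D1) p.2 *
        h (Yobs Z Y0 Y1 p.1) (Yobs Z Y0 Y1 p.2) ∂(P.prod P)
      = ∫ p, zi p.1 * zo p.2 * G0 (T p.1, T p.2) ∂(P.prod P) := by
    refine integral_congr_ae ?_
    filter_upwards [hgood2] with p hp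
    obtain ⟨⟨e1, e2, e3⟩, ⟨f1, f2, f3⟩⟩ := hp
    simp only [wplus, wminus, Dobs, Yobs, hzidef, hzodef, hG0def, hTdef, hVdef,
      hc1def, hc2def]
    rw [← e1, ← e2, ← e3, ← f1, ← f2, ← f3]
    rcases hZ01 p.1 with hz1 | hz1 <;> rcases hZ01 p.2 with hz2 | hz2 <;>
      rcases hD1_01 p.1 with hd1 | hd1 <;> rcases hD0_01 p.2 with hd2 | hd2 <;>
      simp [hz1, hz2, hd1, hd2, Set.indicator_apply, Set.mem_singleton_iff] <;>
      ring
  -- Step 2: replace treatment indicators by the propensity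
  have L2 : ∫ p, zi p.1 * zo p.2 * G0 (T p.1, T p.2) ∂(P.prod P)
      = ∫ p, πt (X p.1) * (1 - πt (X p.2)) * G0 (T p.1, T p.2) ∂(P.prod P) :=
    prod_step P T hT mzi mzo bzi bzo
      (u₁ := fun y => πt y.2) (u₂ := fun y => 1 - πt y.2)
      (hπtm.comp measurable_snd) ((measurable_const.sub hπtm).comp measurable_snd)
      (Cu₁ := 1) (Cu₂ := 1)
      (fun y => by exact abs_le.mpr ⟨by linarith [hπt0 y.2], hπt1 y.2⟩)
      (fun y => by exact abs_le.mpr ⟨by linarith [h1πt0 y.2], h1πt1 y.2⟩)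
      factZ1 factZ0 hG0m hG0b
  -- Step 3: cancel the propensity against the weights
  have L3 : ∫ p, πt (X p.1) * (1 - πt (X p.2)) * G0 (T p.1, T p.2) ∂(P.prod P)
      = ∫ p, M0 (X p.1, X p.2) *
          (ind1 p.1 * ind0 p.2 * h (Y1 p.1) (Y0 p.2)) ∂(P.prod P) := by
    refine integral_congr_ae (ae_of_all _ fun p => ?_)
    simp only [hG0def, hTdef, hVdef, hM0def, hind1def, hind0def, hc1def, hc2def]
    have h1 : πt (X p.1) ≠ 0 := ne_of_gt (hπt_pos _)
    have h2 : (1:ℝ) - πt (X p.2) ≠ 0 := ne_of_gt (h1πt_pos _)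
    have h3 : p1t (X p.1) ≠ 0 := ne_of_gt (hp1t_pos _)
    have h4 : (1:ℝ) - p0t (X p.2) ≠ 0 := ne_of_gt (h1p0t_pos _)
    field_simp
  -- conditional step for a single pair of strata
  have mW : Measurable (fun p : Ω × Ω => (X p.1, X p.2)) :=
    (hX.comp measurable_fst).prodMk (hX.comp measurable_snd)
  have hcs : ∀ (M : 𝒳 × 𝒳 → ℝ), Measurable M → ∀ CM : ℝ, (∀ y, |M y| ≤ CM) →
      ∀ s₁ s₂ : ℝ × ℝ, (s₁ = (1, 0) ∨ s₁ = (1, 1)) → (s₂ = (1, 0) ∨ s₂ = (0, 0)) →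
      ∫ p, M (X p.1, X p.2) *
          (h (Y1 p.1) (Y0 p.2) * strat D0 D1 s₁ p.1 * strat D0 D1 s₂ p.2) ∂(P.prod P)
        = ∫ p, M (X p.1, X p.2) * μt (X p.1, X p.2) *
            (strat D0 D1 s₁ p.1 * strat D0 D1 s₂ p.2) ∂(P.prod P) := by
    intro M hM CM hMb s₁ s₂ hs₁ hs₂
    have hfm : Measurable fun p : Ω × Ω =>
        h (Y1 p.1) (Y0 p.2) * strat D0 D1 s₁ p.1 * strat D0 D1 s₂ p.2 :=
      ((hh.comp ((hY1.comp measurable_fst).prodMk (hY0.comp measurable_snd))).mul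
        ((strat_meas hD0 hD1 s₁).comp measurable_fst)).mul
        ((strat_meas hD0 hD1 s₂).comp measurable_snd)
    have hfb : ∀ p : Ω × Ω,
        |h (Y1 p.1) (Y0 p.2) * strat D0 D1 s₁ p.1 * strat D0 D1 s₂ p.2| ≤ C * 1 * 1 :=
      fun p => abs_mul_le (abs_mul_le (hC _ _) (strat_abs_le _ _ _ _)) (strat_abs_le _ _ _ _)
    have hqm : Measurable fun p : Ω × Ω => strat D0 D1 s₁ p.1 * strat D0 D1 s₂ p.2 :=
      ((strat_meas hD0 hD1 s₁).comp measurable_fst).mul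
        ((strat_meas hD0 hD1 s₂).comp measurable_snd)
    have hqb : ∀ p : Ω × Ω, |strat D0 D1 s₁ p.1 * strat D0 D1 s₂ p.2| ≤ 1 * 1 :=
      fun p => abs_mul_le (strat_abs_le _ _ _ _) (strat_abs_le _ _ _ _)
    exact condstep (P.prod P) mW hfm hfb hqm hqb hμtm hμt_b
      (ppi_clamp P hX hD0 hD1 hY0 hY1 hh hC0 hC hPPI s₁ s₂ hs₁ hs₂) hM hMb
  -- Step 4: pass to principal strata and apply pairwise principal ignorability
  have key4 : ∀ M : 𝒳 × 𝒳 → ℝ, Measurable M → ∀ CM : ℝ, (∀ y, |M y| ≤ CM) →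
      ∫ p, M (X p.1, X p.2) * (ind1 p.1 * ind0 p.2 * h (Y1 p.1) (Y0 p.2)) ∂(P.prod P)
        = ∫ p, M (X p.1, X p.2) * μt (X p.1, X p.2) * (ind1 p.1 * ind0 p.2) ∂(P.prod P) := by
    intro M hM CM hMb
    have hptL : ∀ p : Ω × Ω, M (X p.1, X p.2) * (ind1 p.1 * ind0 p.2 * h (Y1 p.1) (Y0 p.2))
        = M (X p.1, X p.2) * (h (Y1 p.1) (Y0 p.2) * strat D0 D1 (1, 0) p.1 * strat D0 D1 (1, 0) p.2)
          + M (X p.1, X p.2) * (h (Y1 p.1) (Y0 p.2) * strat D0 D1 (1, 0) p.1 * strat D0 D1 (0, 0) p.2)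
          + M (X p.1, X p.2) * (h (Y1 p.1) (Y0 p.2) * strat D0 D1 (1, 1) p.1 * strat D0 D1 (1, 0) p.2)
          + M (X p.1, X p.2) * (h (Y1 p.1) (Y0 p.2) * strat D0 D1 (1, 1) p.1 * strat D0 D1 (0, 0) p.2) := by
      intro p
      simp only [hind1def, hind0def]
      exact strat_expand_h hD0_01 hD1_01 p (M (X p.1, X p.2)) (h (Y1 p.1) (Y0 p.2))
    have hptR : ∀ p : Ω × Ω, M (X p.1, X p.2) * μt (X p.1, X p.2) * (ind1 p.1 * ind0 p.2)
        = M (X p.1, X p.2) * μt (X p.1, X p.2) * (strat D0 D1 (1, 0) p.1 * strat D0 D1 (1, 0) p.2)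
          + M (X p.1, X p.2) * μt (X p.1, X p.2) * (strat D0 D1 (1, 0) p.1 * strat D0 D1 (0, 0) p.2)
          + M (X p.1, X p.2) * μt (X p.1, X p.2) * (strat D0 D1 (1, 1) p.1 * strat D0 D1 (1, 0) p.2)
          + M (X p.1, X p.2) * μt (X p.1, X p.2) * (strat D0 D1 (1, 1) p.1 * strat D0 D1 (0, 0) p.2) := by
      intro p
      simp only [hind1def, hind0def]
      exact strat_expand_q hD0_01 hD1_01 p (M (X p.1, X p.2) * μt (X p.1, X p.2))
    have hTm : ∀ s₁ s₂ : ℝ × ℝ, Integrable (fun p : Ω × Ω => M (X p.1, X p.2) *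
        (h (Y1 p.1) (Y0 p.2) * strat D0 D1 s₁ p.1 * strat D0 D1 s₂ p.2)) (P.prod P) := by
      intro s₁ s₂
      refine integrable_of_bdd ?_ (C := CM * (C * 1 * 1)) (fun p =>
        abs_mul_le (hMb _) (abs_mul_le (abs_mul_le (hC _ _) (strat_abs_le _ _ _ _))
          (strat_abs_le _ _ _ _)))
      exact ((hM.comp mW).mul
        (((hh.comp ((hY1.comp measurable_fst).prodMk (hY0.comp measurable_snd))).mul
          ((strat_meas hD0 hD1 s₁).comp measurable_fst)).mul
          ((strat_meas hD0 hD1 s₂).comp measurable_snd))).aestronglyMeasurable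
    have hQm : ∀ s₁ s₂ : ℝ × ℝ, Integrable (fun p : Ω × Ω => M (X p.1, X p.2) *
        μt (X p.1, X p.2) * (strat D0 D1 s₁ p.1 * strat D0 D1 s₂ p.2)) (P.prod P) := by
      intro s₁ s₂
      refine integrable_of_bdd ?_ (C := CM * C * (1 * 1)) (fun p =>
        abs_mul_le (abs_mul_le (hMb _) (hμt_b _))
          (abs_mul_le (strat_abs_le _ _ _ _) (strat_abs_le _ _ _ _)))
      exact (((hM.comp mW).mul (hμtm.comp mW)).mul
        (((strat_meas hD0 hD1 s₁).comp measurable_fst).mul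
          ((strat_meas hD0 hD1 s₂).comp measurable_snd))).aestronglyMeasurable
    calc ∫ p, M (X p.1, X p.2) * (ind1 p.1 * ind0 p.2 * h (Y1 p.1) (Y0 p.2)) ∂(P.prod P)
        = ∫ p, (M (X p.1, X p.2) * (h (Y1 p.1) (Y0 p.2) * strat D0 D1 (1, 0) p.1 * strat D0 D1 (1, 0) p.2)
            + M (X p.1, X p.2) * (h (Y1 p.1) (Y0 p.2) * strat D0 D1 (1, 0) p.1 * strat D0 D1 (0, 0) p.2)
            + M (X p.1, X p.2) * (h (Y1 p.1) (Y0 p.2) * strat D0 D1 (1, 1) p.1 * strat D0 D1 (1, 0) p.2)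
            + M (X p.1, X p.2) * (h (Y1 p.1) (Y0 p.2) * strat D0 D1 (1, 1) p.1 * strat D0 D1 (0, 0) p.2)) ∂(P.prod P) :=
          integral_congr_ae (ae_of_all _ fun p => hptL p)
      _ = ∫ p, M (X p.1, X p.2) * (h (Y1 p.1) (Y0 p.2) * strat D0 D1 (1, 0) p.1 * strat D0 D1 (1, 0) p.2) ∂(P.prod P)
            + ∫ p, M (X p.1, X p.2) * (h (Y1 p.1) (Y0 p.2) * strat D0 D1 (1, 0) p.1 * strat D0 D1 (0, 0) p.2) ∂(P.prod P)
            + ∫ p, M (X p.1, X p.2) * (h (Y1 p.1) (Y0 p.2) * strat D0 D1 (1, 1) p.1 * strat D0 D1 (1, 0) p.2) ∂(P.prod P)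
            + ∫ p, M (X p.1, X p.2) * (h (Y1 p.1) (Y0 p.2) * strat D0 D1 (1, 1) p.1 * strat D0 D1 (0, 0) p.2) ∂(P.prod P) :=
          integral_sum4 (P.prod P) _ _ _ _ (hTm (1, 0) (1, 0)) (hTm (1, 0) (0, 0))
            (hTm (1, 1) (1, 0)) (hTm (1, 1) (0, 0))
      _ = ∫ p, M (X p.1, X p.2) * μt (X p.1, X p.2) * (strat D0 D1 (1, 0) p.1 * strat D0 D1 (1, 0) p.2) ∂(P.prod P)
            + ∫ p, M (X p.1, X p.2) * μt (X p.1, X p.2) * (strat D0 D1 (1, 0) p.1 * strat D0 D1 (0, 0) p.2) ∂(P.prod P)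
            + ∫ p, M (X p.1, X p.2) * μt (X p.1, X p.2) * (strat D0 D1 (1, 1) p.1 * strat D0 D1 (1, 0) p.2) ∂(P.prod P)
            + ∫ p, M (X p.1, X p.2) * μt (X p.1, X p.2) * (strat D0 D1 (1, 1) p.1 * strat D0 D1 (0, 0) p.2) ∂(P.prod P) := by
          rw [hcs M hM CM hMb (1, 0) (1, 0) (Or.inl rfl) (Or.inl rfl),
            hcs M hM CM hMb (1, 0) (0, 0) (Or.inl rfl) (Or.inr rfl),
            hcs M hM CM hMb (1, 1) (1, 0) (Or.inr rfl) (Or.inl rfl),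
            hcs M hM CM hMb (1, 1) (0, 0) (Or.inr rfl) (Or.inr rfl)]
      _ = ∫ p, (M (X p.1, X p.2) * μt (X p.1, X p.2) * (strat D0 D1 (1, 0) p.1 * strat D0 D1 (1, 0) p.2)
            + M (X p.1, X p.2) * μt (X p.1, X p.2) * (strat D0 D1 (1, 0) p.1 * strat D0 D1 (0, 0) p.2)
            + M (X p.1, X p.2) * μt (X p.1, X p.2) * (strat D0 D1 (1, 1) p.1 * strat D0 D1 (1, 0) p.2)
            + M (X p.1, X p.2) * μt (X p.1, X p.2) * (strat D0 D1 (1, 1) p.1 * strat D0 D1 (0, 0) p.2)) ∂(P.prod P) :=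
          (integral_sum4 (P.prod P) _ _ _ _ (hQm (1, 0) (1, 0)) (hQm (1, 0) (0, 0))
            (hQm (1, 1) (1, 0)) (hQm (1, 1) (0, 0))).symm
      _ = ∫ p, M (X p.1, X p.2) * μt (X p.1, X p.2) * (ind1 p.1 * ind0 p.2) ∂(P.prod P) :=
          integral_congr_ae (ae_of_all _ fun p => (hptR p).symm)
  have L4 : ∫ p, M0 (X p.1, X p.2) * (ind1 p.1 * ind0 p.2 * h (Y1 p.1) (Y0 p.2)) ∂(P.prod P)
      = ∫ p, M0 (X p.1, X p.2) * μt (X p.1, X p.2) * (ind1 p.1 * ind0 p.2) ∂(P.prod P) :=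
    key4 M0 hM0m (2 / ε * (2 / ε)) hM0b
  -- Step 5: integrate out the intermediate indicators
  have L5 : ∫ p, M0 (X p.1, X p.2) * μt (X p.1, X p.2) * (ind1 p.1 * ind0 p.2) ∂(P.prod P)
      = ∫ p, ind1 p.1 * ind0 p.2 * (M0 (X p.1, X p.2) * μt (X p.1, X p.2)) ∂(P.prod P) :=
    integral_congr_ae (ae_of_all _ fun p => by ring)
  have L6 : ∫ p, ind1 p.1 * ind0 p.2 * (M0 (X p.1, X p.2) * μt (X p.1, X p.2)) ∂(P.prod P)
      = ∫ p, p1t (X p.1) * (1 - p0t (X p.2)) *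
          (M0 (X p.1, X p.2) * μt (X p.1, X p.2)) ∂(P.prod P) :=
    prod_step P X hX mInd1 mInd0 bInd1 bInd0
      (u₁ := p1t) (u₂ := fun x => 1 - p0t x) hp1tm (measurable_const.sub hp0tm)
      (Cu₁ := 1) (Cu₂ := 1) bp1t b1p0t factD1 factD0c
      (hM0m.mul hμtm) (CG := 2 / ε * (2 / ε) * C)
      (fun y => abs_mul_le (hM0b y) (hμt_b y))
  have L7 : ∫ p, p1t (X p.1) * (1 - p0t (X p.2)) *
        (M0 (X p.1, X p.2) * μt (X p.1, X p.2)) ∂(P.prod P)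
      = ∫ p, (p1t (X p.1) - p0t (X p.1)) *
          ((p1t (X p.2) - p0t (X p.2)) * μt (X p.1, X p.2)) ∂(P.prod P) := by
    refine integral_congr_ae (ae_of_all _ fun p => ?_)
    simp only [hM0def]
    have h3 : p1t (X p.1) ≠ 0 := ne_of_gt (hp1t_pos _)
    have h4 : (1:ℝ) - p0t (X p.2) ≠ 0 := ne_of_gt (h1p0t_pos _)
    field_simp
  -- the target side
  have R1 : tauN10 P D0 D1 Y0 Y1 h
      = ∫ p, (1:ℝ) *
          (h (Y1 p.1) (Y0 p.2) * strat D0 D1 (1, 0) p.1 * strat D0 D1 (1, 0) p.2) ∂(P.prod P) := by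
    rw [tauN10]
    exact integral_congr_ae (ae_of_all _ fun p => by ring)
  have R2 : ∫ p, (1:ℝ) *
        (h (Y1 p.1) (Y0 p.2) * strat D0 D1 (1, 0) p.1 * strat D0 D1 (1, 0) p.2) ∂(P.prod P)
      = ∫ p, (1:ℝ) * μt (X p.1, X p.2) *
          (strat D0 D1 (1, 0) p.1 * strat D0 D1 (1, 0) p.2) ∂(P.prod P) :=
    hcs (fun _ => (1:ℝ)) measurable_const 1 (fun y => by norm_num)
      (1, 0) (1, 0) (Or.inl rfl) (Or.inl rfl)
  have hst10 : ∀ᵐ ω ∂P, strat D0 D1 (1, 0) ω = D1 ω - D0 ω := by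
    filter_upwards [hmono] with ω hω
    rcases hD1_01 ω with h1 | h1 <;> rcases hD0_01 ω with h2 | h2
    · norm_num [strat, Prod.ext_iff, h1, h2]
    · exfalso; rw [h1, h2] at hω; linarith
    · norm_num [strat, Prod.ext_iff, h1, h2]
    · norm_num [strat, Prod.ext_iff, h1, h2]
  have R3 : ∫ p, (1:ℝ) * μt (X p.1, X p.2) *
        (strat D0 D1 (1, 0) p.1 * strat D0 D1 (1, 0) p.2) ∂(P.prod P)
      = ∫ p, (D1 p.1 - D0 p.1) * (D1 p.2 - D0 p.2) *
          μt (X p.1, X p.2) ∂(P.prod P) := by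
    refine integral_congr_ae ?_
    filter_upwards [ae_prod_of_ae hst10] with p hp
    rw [hp.1, hp.2]
    ring
  have R4 : ∫ p, (D1 p.1 - D0 p.1) * (D1 p.2 - D0 p.2) *
        μt (X p.1, X p.2) ∂(P.prod P)
      = ∫ p, (p1t (X p.1) - p0t (X p.1)) * (p1t (X p.2) - p0t (X p.2)) *
          μt (X p.1, X p.2) ∂(P.prod P) :=
    prod_step P X hX mDe mDe bDe bDe
      (u₁ := fun x => p1t x - p0t x) (u₂ := fun x => p1t x - p0t x) met met
      (Cu₁ := 2) (Cu₂ := 2) bet bet factDe factDe hμtm (CG := C) hμt_b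
  have R5 : ∫ p, (p1t (X p.1) - p0t (X p.1)) * (p1t (X p.2) - p0t (X p.2)) *
        μt (X p.1, X p.2) ∂(P.prod P)
      = ∫ p, (p1t (X p.1) - p0t (X p.1)) *
          ((p1t (X p.2) - p0t (X p.2)) * μt (X p.1, X p.2)) ∂(P.prod P) :=
    integral_congr_ae (ae_of_all _ fun p => by ring)
  calc ∫ p, wplus πf p0f p1f X Z (Dobs Z D0 D1) p.1 *
        wminus πf p0f p1f X Z (Dobs Z D0 D1) p.2 *
        h (Yobs Z Y0 Y1 p.1) (Yobs Z Y0 Y1 p.2) ∂(P.prod P)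
      = ∫ p, (p1t (X p.1) - p0t (X p.1)) *
          ((p1t (X p.2) - p0t (X p.2)) * μt (X p.1, X p.2)) ∂(P.prod P) := by
        rw [L1, L2, L3, L4, L5, L6, L7]
    _ = tauN10 P D0 D1 Y0 Y1 h := by
        rw [R1, R2, R3, R4, R5]



end
end

section
/- Sensitivity-analysis principal score formulas without monotonicity: let D(0), D(1) be {0,1}-valued random variables, let p_z(X) be a σ(X)-measurable version of P(D(z)=1 | σ(X)) for z ∈ {0,1}, and for each stratum s ∈ {10, 01, 00, 11} let e_s(X) be a σ(X)-measurable version of P(S = s | σ(X)). Suppose there is a σ(X)-measurable sensitivity function η(X) with η(X) ≥ 0 and η(X) ≠ 1 almost surely such that e_01(X) = η(X)·e_10(X) almost surely. Then, almost surely, e_10(X) = (p_1(X) − p_0(X))/(1 − η(X)), e_01(X) = η(X)·(p_1(X) − p_0(X))/(1 − η(X)), e_00(X) = 1 − p_0(X) − (p_1(X) − p_0(X))/(1 − η(X)), and e_11(X) = p_1(X) − (p_1(X) − p_0(X))/(1 − η(X)). -/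
open MeasureTheory ProbabilityTheory Set

noncomputable section

variable {Ω 𝒳 : Type*} [MeasurableSpace Ω] [MeasurableSpace 𝒳]

/-- **Sensitivity-analysis principal score formulas without monotonicity.** If the
conditional odds of the harmed versus the benefited stratum is `η(X)` (with `η(X) ≥ 0`,
`η(X) ≠ 1` a.s.), i.e. `e_01(X) = η(X)·e_10(X)`, then almost surely
`e_10(X) = (p_1(X) − p_0(X))/(1 − η(X))`,
`e_01(X) = η(X)·(p_1(X) − p_0(X))/(1 − η(X))`,
`e_00(X) = 1 − p_0(X) − (p_1(X) − p_0(X))/(1 − η(X))`, and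
`e_11(X) = p_1(X) − (p_1(X) − p_0(X))/(1 − η(X))`. -/
theorem sensitivity_principal_scores [StandardBorelSpace 𝒳]
    (P : Measure Ω) [IsProbabilityMeasure P]
    (X : Ω → 𝒳) (D0 D1 : Ω → ℝ)
    (hX : Measurable X) (hD0 : Measurable D0) (hD1 : Measurable D1)
    (hD0_01 : ∀ ω, D0 ω = 0 ∨ D0 ω = 1) (hD1_01 : ∀ ω, D1 ω = 0 ∨ D1 ω = 1)
    -- p_z is a σ(X)-measurable version of P(D(z)=1 | σ(X)), for z ∈ {0,1}
    (p0f p1f : 𝒳 → ℝ)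
    (hp0 : IsCondProb P X {ω | D0 ω = 1} p0f) (hp1 : IsCondProb P X {ω | D1 ω = 1} p1f)
    -- e_s is a σ(X)-measurable version of P(S = s | σ(X)), for each stratum s
    (e10f e01f e00f e11f : 𝒳 → ℝ)
    (he10 : IsCondProb P X {ω | D1 ω = 1 ∧ D0 ω = 0} e10f)
    (he01 : IsCondProb P X {ω | D1 ω = 0 ∧ D0 ω = 1} e01f)
    (he00 : IsCondProb P X {ω | D1 ω = 0 ∧ D0 ω = 0} e00f)
    (he11 : IsCondProb P X {ω | D1 ω = 1 ∧ D0 ω = 1} e11f)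
    -- the σ(X)-measurable sensitivity function η, with η(X) ≥ 0 and η(X) ≠ 1 a.s.
    (η : 𝒳 → ℝ) (hη : Measurable η)
    (hηr : ∀ᵐ ω ∂P, 0 ≤ η (X ω) ∧ η (X ω) ≠ 1)
    -- e_01(X) = η(X)·e_10(X) almost surely
    (hrel : (fun ω => e01f (X ω)) =ᵐ[P] fun ω => η (X ω) * e10f (X ω)) :
    ((fun ω => e10f (X ω)) =ᵐ[P]
        fun ω => (p1f (X ω) - p0f (X ω)) / (1 - η (X ω))) ∧
    ((fun ω => e01f (X ω)) =ᵐ[P]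
        fun ω => η (X ω) * (p1f (X ω) - p0f (X ω)) / (1 - η (X ω))) ∧
    ((fun ω => e00f (X ω)) =ᵐ[P]
        fun ω => 1 - p0f (X ω) - (p1f (X ω) - p0f (X ω)) / (1 - η (X ω))) ∧
    ((fun ω => e11f (X ω)) =ᵐ[P]
        fun ω => p1f (X ω) - (p1f (X ω) - p0f (X ω)) / (1 - η (X ω))) := by

  have hm : MeasurableSpace.comap X inferInstance ≤ ‹MeasurableSpace Ω› := hX.comap_le
  have hs10 : MeasurableSet {ω | D1 ω = 1 ∧ D0 ω = 0} :=
    (hD1 (measurableSet_singleton 1)).inter (hD0 (measurableSet_singleton 0))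
  have hs01 : MeasurableSet {ω | D1 ω = 0 ∧ D0 ω = 1} :=
    (hD1 (measurableSet_singleton 0)).inter (hD0 (measurableSet_singleton 1))
  have hs00 : MeasurableSet {ω | D1 ω = 0 ∧ D0 ω = 0} :=
    (hD1 (measurableSet_singleton 0)).inter (hD0 (measurableSet_singleton 0))
  have hs11 : MeasurableSet {ω | D1 ω = 1 ∧ D0 ω = 1} :=
    (hD1 (measurableSet_singleton 1)).inter (hD0 (measurableSet_singleton 1))
  have hint : ∀ (A : Set Ω), MeasurableSet A →
      Integrable (A.indicator (fun _ => (1 : ℝ))) P := fun A hA =>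
    (integrable_const 1).indicator hA
  -- key: condexp of sum of two indicators
  have key : ∀ (A B C : Set Ω), MeasurableSet A → MeasurableSet B →
      (∀ ω, C.indicator (fun _ => (1 : ℝ)) ω
          = A.indicator (fun _ => (1 : ℝ)) ω + B.indicator (fun _ => (1 : ℝ)) ω) →
      P[C.indicator (fun _ => (1 : ℝ)) | MeasurableSpace.comap X inferInstance] =ᵐ[P]
        fun ω => (P[A.indicator (fun _ => (1 : ℝ)) | MeasurableSpace.comap X inferInstance]) ω
          + (P[B.indicator (fun _ => (1 : ℝ)) | MeasurableSpace.comap X inferInstance]) ω := by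
    intro A B C hA hB hC
    have h1 : P[C.indicator (fun _ => (1 : ℝ)) | MeasurableSpace.comap X inferInstance]
        =ᵐ[P] P[(fun ω => A.indicator (fun _ => (1 : ℝ)) ω
            + B.indicator (fun _ => (1 : ℝ)) ω) | MeasurableSpace.comap X inferInstance] :=
      condExp_congr_ae (Filter.Eventually.of_forall hC)
    exact h1.trans (condExp_add (hint A hA) (hint B hB) _)
  -- p1 = e10 + e11
  have hp1sum : (fun ω => p1f (X ω)) =ᵐ[P]
      fun ω => e10f (X ω) + e11f (X ω) := by
    have hk := key _ _ {ω | D1 ω = 1} hs10 hs11 (fun ω => by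
      rcases hD0_01 ω with h0 | h0 <;> rcases hD1_01 ω with h1 | h1 <;>
        simp [Set.indicator, h0, h1])
    filter_upwards [hp1.2, he10.2, he11.2, hk] with ω h1 h2 h3 h4
    rw [h1, h4, h2, h3]
  -- p0 = e01 + e11
  have hp0sum : (fun ω => p0f (X ω)) =ᵐ[P]
      fun ω => e01f (X ω) + e11f (X ω) := by
    have hk := key _ _ {ω | D0 ω = 1} hs01 hs11 (fun ω => by
      rcases hD0_01 ω with h0 | h0 <;> rcases hD1_01 ω with h1 | h1 <;>
        simp [Set.indicator, h0, h1])
    filter_upwards [hp0.2, he01.2, he11.2, hk] with ω h1 h2 h3 h4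
    rw [h1, h4, h2, h3]
  -- e10 + e01 + e00 + e11 = 1
  have hsum1 : (fun ω => e10f (X ω) + e01f (X ω) + e00f (X ω) + e11f (X ω))
      =ᵐ[P] fun _ => (1 : ℝ) := by
    have hAB : P[(fun ω => ({ω | D1 ω = 1 ∧ D0 ω = 0}).indicator (fun _ => (1:ℝ)) ω
        + ({ω | D1 ω = 0 ∧ D0 ω = 1}).indicator (fun _ => (1:ℝ)) ω) | MeasurableSpace.comap X inferInstance] =ᵐ[P]
        fun ω => (P[({ω | D1 ω = 1 ∧ D0 ω = 0}).indicator (fun _ => (1:ℝ)) | MeasurableSpace.comap X inferInstance]) ω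
          + (P[({ω | D1 ω = 0 ∧ D0 ω = 1}).indicator (fun _ => (1:ℝ)) | MeasurableSpace.comap X inferInstance]) ω :=
      condExp_add (hint _ hs10) (hint _ hs01) _
    have hABC : P[(fun ω => (({ω | D1 ω = 1 ∧ D0 ω = 0}).indicator (fun _ => (1:ℝ)) ω
          + ({ω | D1 ω = 0 ∧ D0 ω = 1}).indicator (fun _ => (1:ℝ)) ω)
        + ({ω | D1 ω = 0 ∧ D0 ω = 0}).indicator (fun _ => (1:ℝ)) ω) | MeasurableSpace.comap X inferInstance] =ᵐ[P]
        fun ω => (P[(fun ω => ({ω | D1 ω = 1 ∧ D0 ω = 0}).indicator (fun _ => (1:ℝ)) ω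
            + ({ω | D1 ω = 0 ∧ D0 ω = 1}).indicator (fun _ => (1:ℝ)) ω) | MeasurableSpace.comap X inferInstance]) ω
          + (P[({ω | D1 ω = 0 ∧ D0 ω = 0}).indicator (fun _ => (1:ℝ)) | MeasurableSpace.comap X inferInstance]) ω :=
      condExp_add ((hint _ hs10).add (hint _ hs01)) (hint _ hs00) _
    have hABCD : P[(fun ω => ((({ω | D1 ω = 1 ∧ D0 ω = 0}).indicator (fun _ => (1:ℝ)) ω
            + ({ω | D1 ω = 0 ∧ D0 ω = 1}).indicator (fun _ => (1:ℝ)) ω)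
          + ({ω | D1 ω = 0 ∧ D0 ω = 0}).indicator (fun _ => (1:ℝ)) ω)
        + ({ω | D1 ω = 1 ∧ D0 ω = 1}).indicator (fun _ => (1:ℝ)) ω) | MeasurableSpace.comap X inferInstance] =ᵐ[P]
        fun ω => (P[(fun ω => (({ω | D1 ω = 1 ∧ D0 ω = 0}).indicator (fun _ => (1:ℝ)) ω
              + ({ω | D1 ω = 0 ∧ D0 ω = 1}).indicator (fun _ => (1:ℝ)) ω)
            + ({ω | D1 ω = 0 ∧ D0 ω = 0}).indicator (fun _ => (1:ℝ)) ω) | MeasurableSpace.comap X inferInstance]) ω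
          + (P[({ω | D1 ω = 1 ∧ D0 ω = 1}).indicator (fun _ => (1:ℝ)) | MeasurableSpace.comap X inferInstance]) ω :=
      condExp_add (((hint _ hs10).add (hint _ hs01)).add (hint _ hs00)) (hint _ hs11) _
    have hptw : ∀ ω, ((({ω | D1 ω = 1 ∧ D0 ω = 0}).indicator (fun _ => (1:ℝ)) ω
            + ({ω | D1 ω = 0 ∧ D0 ω = 1}).indicator (fun _ => (1:ℝ)) ω)
          + ({ω | D1 ω = 0 ∧ D0 ω = 0}).indicator (fun _ => (1:ℝ)) ω)
        + ({ω | D1 ω = 1 ∧ D0 ω = 1}).indicator (fun _ => (1:ℝ)) ω = (1 : ℝ) := by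
      intro ω
      rcases hD0_01 ω with h0 | h0 <;> rcases hD1_01 ω with h1 | h1 <;>
        simp [Set.indicator, h0, h1]
    have hconst : P[(fun ω => ((({ω | D1 ω = 1 ∧ D0 ω = 0}).indicator (fun _ => (1:ℝ)) ω
            + ({ω | D1 ω = 0 ∧ D0 ω = 1}).indicator (fun _ => (1:ℝ)) ω)
          + ({ω | D1 ω = 0 ∧ D0 ω = 0}).indicator (fun _ => (1:ℝ)) ω)
        + ({ω | D1 ω = 1 ∧ D0 ω = 1}).indicator (fun _ => (1:ℝ)) ω) | MeasurableSpace.comap X inferInstance]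
        =ᵐ[P] fun _ => (1 : ℝ) := by
      refine (condExp_congr_ae (Filter.Eventually.of_forall hptw)).trans ?_
      rw [condExp_const hm (1 : ℝ)]
    filter_upwards [he10.2, he01.2, he00.2, he11.2, hAB, hABC, hABCD, hconst]
      with ω h1 h2 h3 h4 h5 h6 h7 h8
    rw [h1, h2, h3, h4, ← h5, ← h6, ← h7, h8]
  -- combine pointwise
  have main : ∀ᵐ ω ∂P,
      e10f (X ω) = (p1f (X ω) - p0f (X ω)) / (1 - η (X ω)) ∧
      e01f (X ω) = η (X ω) * (p1f (X ω) - p0f (X ω)) / (1 - η (X ω)) ∧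
      e00f (X ω) = 1 - p0f (X ω) - (p1f (X ω) - p0f (X ω)) / (1 - η (X ω)) ∧
      e11f (X ω) = p1f (X ω) - (p1f (X ω) - p0f (X ω)) / (1 - η (X ω)) := by
    filter_upwards [hηr, hrel, hp1sum, hp0sum, hsum1] with ω hη1 hrel1 h1 h0 hs
    obtain ⟨-, hne⟩ := hη1
    have hden : (1 : ℝ) - η (X ω) ≠ 0 := sub_ne_zero.mpr (Ne.symm hne)
    have h10 : e10f (X ω) = (p1f (X ω) - p0f (X ω)) / (1 - η (X ω)) := by
      rw [h1, h0, hrel1]; field_simp; ring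
    refine ⟨h10, ?_, ?_, ?_⟩
    · rw [hrel1, h10, mul_div_assoc]
    · have : e00f (X ω) = 1 - p0f (X ω) - e10f (X ω) := by
        rw [h0, hrel1]; linarith [hs]
      rw [this, h10]
    · have : e11f (X ω) = p1f (X ω) - e10f (X ω) := by rw [h1]; ring
      rw [this, h10]
  refine ⟨?_, ?_, ?_, ?_⟩ <;> · filter_upwards [main] with ω h; tauto

end
end
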